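/- Let Θ be a DTAS which self-assembles the pattern Q using at most m_b black tile types and m_g gray tile types. Then a white tile type of Θ which is used in one of the positions A, B₁, B₂, C₁, C₂, D₁ or D₂ of some supertile cannot be used in any other of these positions in any supertile. -/

import Mathlib

/-- A colored Wang tile with a color and four glues (north, east, south, west). -/
structure Tile (C G : Type) where
  color : C
  north : G
  east : G
  south : G
  west : G
deriving DecidableEq

/-- A rectilinear tile assembly system: a finite set of tile types together with
an L-shaped seed, given by its north glues (bottom arm) and east glues (left arm). -/
structure RTAS (C G : Type) where
  tiles : Finset (Tile C G)
  seedN : ℕ → G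
  seedE : ℕ → G

/-- A tile assignment for the `M × N` rectangle spanned by the seed:
every tile belongs to the system, west/south glues match the east/north glues of the
west/south neighbours, and the seed glues on the boundary. -/
def IsAssignment {C G : Type} (T : RTAS C G) (M N : ℕ) (f : ℕ → ℕ → Tile C G) : Prop :=
  (∀ x < M, ∀ y < N, f x y ∈ T.tiles) ∧
  (∀ y < N, (f 0 y).west = T.seedE y) ∧
  (∀ x < M, (f x 0).south = T.seedN x) ∧
  (∀ x, x + 1 < M → ∀ y < N, (f (x + 1) y).west = (f x y).east) ∧
  (∀ x < M, ∀ y, y + 1 < N → (f x (y + 1)).south = (f x y).north)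

/-- `T` self-assembles the `M × N` pattern `P` if some tile assignment realizes `P`. -/
def SelfAssembles {C G : Type} (T : RTAS C G) (M N : ℕ) (P : ℕ → ℕ → C) : Prop :=
  ∃ f, IsAssignment T M N f ∧ ∀ x < M, ∀ y < N, (f x y).color = P x y

/-- A directed RTAS: distinct tile types differ in their south or west glue. -/
def DirectedTAS {C G : Type} (T : RTAS C G) : Prop :=
  ∀ t₁ ∈ T.tiles, ∀ t₂ ∈ T.tiles, t₁ ≠ t₂ → t₁.south ≠ t₂.south ∨ t₁.west ≠ t₂.west

/-- The set of colors occurring in the `M × N` pattern `P`. -/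
def colorsOf {C : Type} [DecidableEq C] (M N : ℕ) (P : ℕ → ℕ → C) : Finset C :=
  (Finset.range M ×ˢ Finset.range N).image fun q => P q.1 q.2

/-- The named colors used in the subpatterns of the pattern `P_F` of the paper.
`uniq n` are the "unique" filler colors. -/
inductive PColor where
  | orC | plus | minus
  | Z1 | Z2 | Z3 | Z4
  | aC | bW | bD | cW | cD | dC
  | arrW (w : Fin 2)
  | arrD (w : Fin 2)
  | upW (s : Fin 2)
  | upD (s : Fin 2)
  | gate (i : Fin 4)
  | X (i : Fin 8)
  | Y (i : Fin 8)
  | varW (v : ℕ)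
  | negW (v : ℕ)
  | varAux (v : ℕ)
  | varMod (v : ℕ)
  | varModd (v : ℕ)
  | uniq (n : ℕ)
deriving DecidableEq

/-- The `16 × 2` subpattern `p`: eight `2 × 2` blocks, block `i` having colors
`Xᵢ` (bottom-left), `OR` (bottom-right, top-left) and `Yᵢ` (top-right). -/
def pPat : ℕ → ℕ → PColor := fun x y =>
  if y = 0 then
    if x % 2 = 0 then PColor.X ⟨x / 2 % 8, Nat.mod_lt _ (by norm_num)⟩ else PColor.orC
  else
    if x % 2 = 0 then PColor.orC else PColor.Y ⟨x / 2 % 8, Nat.mod_lt _ (by norm_num)⟩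

/-- The `4 × 4` subpatterns `q₁, …, q₄` (index `idx = 0, …, 3`), with west input
`w = idx / 2` and south input `s = idx % 2` feeding an `OR`-colored position. -/
def qPat (idx : Fin 4) : ℕ → ℕ → PColor := fun x y =>
  let wv : Fin 2 := ⟨idx.val / 2, by have := idx.isLt; omega⟩
  let sv : Fin 2 := ⟨idx.val % 2, Nat.mod_lt _ (by norm_num)⟩
  match x, y with
  | 0, 0 => PColor.Z1
  | 1, 0 => PColor.Z2
  | 2, 0 => PColor.upD sv
  | 3, 0 => PColor.bD
  | 0, 1 => PColor.Z3
  | 1, 1 => PColor.aC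
  | 2, 1 => PColor.upW sv
  | 3, 1 => PColor.bW
  | 0, 2 => PColor.arrD wv
  | 1, 2 => PColor.arrW wv
  | 2, 2 => PColor.orC
  | 3, 2 => if idx.val = 0 then PColor.minus else PColor.plus
  | 0, 3 => PColor.cD
  | 1, 3 => PColor.cW
  | 2, 3 => PColor.gate idx
  | _, _ => PColor.dC

/-- The `6 × 3` subpattern `q₅`: bottom row `a ↑₀ ↑₁ ↑₀ ↑₁ b`, middle row
`→₀ OR OR OR OR +`, top row `c A B C D d`. -/
def q5Pat : ℕ → ℕ → PColor := fun x y =>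
  match y, x with
  | 0, 0 => PColor.aC
  | 0, 1 => PColor.upW 0
  | 0, 2 => PColor.upW 1
  | 0, 3 => PColor.upW 0
  | 0, 4 => PColor.upW 1
  | 0, _ => PColor.bW
  | 1, 0 => PColor.arrW 0
  | 1, 5 => PColor.plus
  | 1, _ => PColor.orC
  | 2, 0 => PColor.cW
  | 2, 1 => PColor.gate 0
  | 2, 2 => PColor.gate 1
  | 2, 3 => PColor.gate 2
  | 2, 4 => PColor.gate 3
  | _, _ => PColor.dC

/-- A literal: a variable index together with its sign (`true` = positive). -/
abbrev Lit := ℕ × Bool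

/-- A clause with three literals. -/
abbrev Clause3 := Lit × Lit × Lit

/-- A boolean formula in 3-CNF over the variables `0, …, numVars - 1`. -/
structure CNF3 where
  numVars : ℕ
  clauses : List Clause3
  wf : ∀ cl ∈ clauses, cl.1.1 < numVars ∧ cl.2.1.1 < numVars ∧ cl.2.2.1 < numVars

/-- Value of a literal under a variable assignment. -/
def litVal (f : ℕ → Bool) (l : Lit) : Bool := if l.2 then f l.1 else ! f l.1

/-- A 3-CNF formula is satisfiable if some assignment makes every clause true. -/
def CNF3.Satisfiable (F : CNF3) : Prop :=
  ∃ f : ℕ → Bool, ∀ cl ∈ F.clauses,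
    (litVal f cl.1 || litVal f cl.2.1 || litVal f cl.2.2) = true

/-- The `2 × 2` subpattern `r₁(v)`. -/
def r1Pat (v : ℕ) : ℕ → ℕ → PColor := fun x y =>
  match x, y with
  | 0, 0 => PColor.Z4
  | 1, 0 => PColor.varW v
  | 0, 1 => PColor.varAux v
  | _, _ => PColor.varMod v

/-- The `2 × 2` subpattern `r₂(v)`. -/
def r2Pat (v : ℕ) : ℕ → ℕ → PColor := fun x y =>
  match x, y with
  | 0, 0 => PColor.Z4
  | 1, 0 => PColor.negW v
  | 0, 1 => PColor.varAux v
  | _, _ => PColor.varModd v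

/-- The `4 × 2` subpattern `r₃(v)`: bottom row `a v ¬v b`, top row `→₀ OR OR +`. -/
def r3Pat (v : ℕ) : ℕ → ℕ → PColor := fun x y =>
  match y, x with
  | 0, 0 => PColor.aC
  | 0, 1 => PColor.varW v
  | 0, 2 => PColor.negW v
  | 0, _ => PColor.bW
  | 1, 0 => PColor.arrW 0
  | 1, 3 => PColor.plus
  | _, _ => PColor.orC

/-- The color of a literal. -/
def litColor (l : Lit) : PColor := if l.2 then PColor.varW l.1 else PColor.negW l.1

/-- The `5 × 2` subpattern `s(C)` for a clause `C = (c₁ ∨ c₂ ∨ c₃)`: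
bottom row `a c₁ c₂ c₃ b`, top row `→₀ OR OR OR +`. -/
def sPat (cl : Clause3) : ℕ → ℕ → PColor := fun x y =>
  match y, x with
  | 0, 0 => PColor.aC
  | 0, 1 => litColor cl.1
  | 0, 2 => litColor cl.2.1
  | 0, 3 => litColor cl.2.2
  | 0, _ => PColor.bW
  | 1, 0 => PColor.arrW 0
  | 1, 4 => PColor.plus
  | _, _ => PColor.orC

/-- A rectangular block: width, height and contents. -/
abbrev PBlock := ℕ × ℕ × (ℕ → ℕ → PColor)

/-- The list of subpatterns of `P_F`: `p`, `q₁, …, q₅`, then `r₁(v), r₂(v), r₃(v)`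
for every variable `v`, then `s(C)` for every clause `C`. -/
def blocksOf (F : CNF3) : List PBlock :=
  [(16, 2, pPat), (4, 4, qPat 0), (4, 4, qPat 1), (4, 4, qPat 2), (4, 4, qPat 3),
    (6, 3, q5Pat)]
    ++ (List.range F.numVars).flatMap
        (fun v => [(2, 2, r1Pat v), (2, 2, r2Pat v), (4, 2, r3Pat v)])
    ++ F.clauses.map (fun cl => (5, 2, sPat cl))

/-- Place the blocks side by side (starting at column `x0`, occupying rows `1, …, h`),
with one column of unique colors before each block and after the last one; all the
remaining positions carry unique colors (`uniq` of the position code). -/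
def place : List PBlock → ℕ → ℕ → ℕ → PColor
  | [], _, x, y => PColor.uniq (Nat.pair x y)
  | b :: bs, x0, x, y =>
      if x0 ≤ x ∧ x < x0 + b.1 ∧ 1 ≤ y ∧ y < 1 + b.2.1 then
        b.2.2 (x - x0) (y - 1)
      else if x < x0 + b.1 + 1 then PColor.uniq (Nat.pair x y)
      else place bs (x0 + b.1 + 1) x y

/-- The pattern `P_F` of the paper, of height `6` and width `45 + 11·|V| + 6·ℓ`. -/
def patF (F : CNF3) : ℕ → ℕ → PColor := fun x y => place (blocksOf F) 1 x y

/-- The width of the pattern `P_F`. -/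
def widthF (F : CNF3) : ℕ := 45 + 11 * F.numVars + 6 * F.clauses.length

/-- The three colors black, white, gray. -/
inductive BWG where
  | black | white | gray
deriving DecidableEq

/-- The number of tile types of a given color in a tile assembly system. -/
def countColor {C G : Type} [DecidableEq C] (T : RTAS C G) (c : C) : ℕ :=
  (T.tiles.filter (fun t => t.color = c)).card

/-- The `ℓ × ℓ` supertile portraying the color `c ∈ [k]` (with `ℓ = 5k + 8`):
white bottom row and left column; gray top row and right column except for one
white position at index `c + 1` of each (the color counters); black interior. -/
def superPat (ℓ c : ℕ) : ℕ → ℕ → BWG := fun x y =>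
  if y = 0 then BWG.white
  else if x = 0 then BWG.white
  else if y = ℓ - 1 then (if x = c + 1 then BWG.white else BWG.gray)
  else if x = ℓ - 1 then (if y = c + 1 then BWG.white else BWG.gray)
  else BWG.black

/-- The black/white/gray pattern `Q` built from the `w × h` pattern `P` with colors
in `[k]`: each position `(x, y)` of `P` is replaced by the `ℓ × ℓ` supertile
portraying `P x y` (supertiles in the bottom row/left column of `P` are
incomplete, lacking their white bottom row/left column), and three gadget rows
and three gadget columns are appended at the top and at the right. -/
def QPat (k w h : ℕ) (P : ℕ → ℕ → ℕ) : ℕ → ℕ → BWG := fun X Y =>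
  let ℓ := 5 * k + 8
  if X + 1 < ℓ * w ∧ Y + 1 < ℓ * h then
    superPat ℓ (P ((X + 1) / ℓ) ((Y + 1) / ℓ)) ((X + 1) % ℓ) ((Y + 1) % ℓ)
  else if X + 1 < ℓ * w then
    -- the three gadget rows
    if Y = ℓ * h then (if X = k then BWG.white else BWG.gray)
    else (if (X + 1) % ℓ = ℓ - 1 then BWG.gray else BWG.black)
  else if Y + 1 < ℓ * h then
    -- the three gadget columns
    if X = ℓ * w then (if Y = k then BWG.white else BWG.gray)
    else (if (Y + 1) % ℓ = ℓ - 1 then BWG.gray else BWG.black)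
  else
    -- the top-right 3 × 3 corner
    if X = ℓ * w ∨ Y = ℓ * h then BWG.gray else BWG.black

/-- Width of the pattern `Q`. -/
def QW (k w : ℕ) : ℕ := (5 * k + 8) * w + 2

/-- Height of the pattern `Q`. -/
def QH (k h : ℕ) : ℕ := (5 * k + 8) * h + 2

/-- `(P, m) ∈ ℐ` (with `m = k + 3`): `P` is, up to an identification `ρ` of its
colors with `[k] = {1, …, k}`, the pattern `P_F` of a 3-CNF formula `F`. -/
def InI (k w h : ℕ) (P : ℕ → ℕ → ℕ) : Prop :=
  ∃ (F : CNF3) (ρ : PColor → ℕ),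
    w = widthF F ∧ h = 6 ∧
    Set.BijOn ρ (↑(colorsOf (widthF F) 6 (patF F))) (Set.Icc 1 k) ∧
    ∀ x < w, ∀ y < h, P x y = ρ (patF F x y)

/-- The tile assignment of the supertile at `(x, y)` of the supertile grid,
as a partial function on inner coordinates: inner position `(i, j)` corresponds
to the global position `(x·ℓ + i - 1, y·ℓ + j - 1)`; positions with `i = 0`
(resp. `j = 0`) exist only if `x ≥ 1` (resp. `y ≥ 1`). -/
def superOpt {G : Type} (ℓ : ℕ) (f : ℕ → ℕ → Tile BWG G) (x y : ℕ) :
    ℕ → ℕ → Option (Tile BWG G) := fun i j =>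
  if i < ℓ ∧ j < ℓ ∧ (1 ≤ x ∨ 1 ≤ i) ∧ (1 ≤ y ∨ 1 ≤ j) then
    some (f (x * ℓ + i - 1) (y * ℓ + j - 1))
  else none

/-- `s(N)`: the north output of a supertile, i.e. the north glue of its tile in
position `C₂` (inner position `(0, ℓ - 1)`); defined for `x ≥ 1`. -/
def stN {G : Type} (ℓ : ℕ) (f : ℕ → ℕ → Tile BWG G) (x y : ℕ) : G :=
  (f (x * ℓ - 1) (y * ℓ + ℓ - 2)).north

/-- `s(E)`: the east output of a supertile, i.e. the east glue of its tile in
position `C₁` (inner position `(ℓ - 1, 0)`); defined for `y ≥ 1`. -/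
def stE {G : Type} (ℓ : ℕ) (f : ℕ → ℕ → Tile BWG G) (x y : ℕ) : G :=
  (f (x * ℓ + ℓ - 2) (y * ℓ - 1)).east

/-- `s(S)`: the south input of a supertile, i.e. the south glue of its tile in
position `A` (inner position `(0, 0)`); defined for `x, y ≥ 1`. -/
def stS {G : Type} (ℓ : ℕ) (f : ℕ → ℕ → Tile BWG G) (x y : ℕ) : G :=
  (f (x * ℓ - 1) (y * ℓ - 1)).south

/-- `s(W)`: the west input of a supertile, i.e. the west glue of its tile in
position `A` (inner position `(0, 0)`); defined for `x, y ≥ 1`. -/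
def stW {G : Type} (ℓ : ℕ) (f : ℕ → ℕ → Tile BWG G) (x y : ℕ) : G :=
  (f (x * ℓ - 1) (y * ℓ - 1)).west

/-- The seven distinguished white positions of a supertile. -/
inductive PosKind where
  | A | B1 | B2 | C1 | C2 | D1 | D2
deriving DecidableEq

/-- The inner coordinates `(i, j)` of a position of kind `p` in a supertile with
side `ℓ` portraying the color `c`. -/
def kindSpec (ℓ c : ℕ) : PosKind → ℕ → ℕ → Prop
  | .A, i, j => i = 0 ∧ j = 0
  | .B1, i, j => 1 ≤ i ∧ i ≤ ℓ - 2 ∧ j = 0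
  | .C1, i, j => i = ℓ - 1 ∧ j = 0
  | .B2, i, j => i = 0 ∧ 1 ≤ j ∧ j ≤ ℓ - 2
  | .C2, i, j => i = 0 ∧ j = ℓ - 1
  | .D1, i, j => i = ℓ - 1 ∧ j = c + 1
  | .D2, i, j => i = c + 1 ∧ j = ℓ - 1

/-- The tile `t` is used at a position of kind `p` in some (possibly incomplete)
supertile of the tile assignment `f`. -/
def UsedAt {G : Type} (k w h : ℕ) (P : ℕ → ℕ → ℕ) (f : ℕ → ℕ → Tile BWG G)
    (t : Tile BWG G) (p : PosKind) : Prop :=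
  ∃ x < w, ∃ y < h, ∃ i j, i < 5 * k + 8 ∧ j < 5 * k + 8 ∧
    (1 ≤ x ∨ 1 ≤ i) ∧ (1 ≤ y ∨ 1 ≤ j) ∧
    kindSpec (5 * k + 8) (P x y) p i j ∧
    f (x * (5 * k + 8) + i - 1) (y * (5 * k + 8) + j - 1) = t

set_option linter.unusedSectionVars false

namespace NoMixup

structure Setup (G : Type) [DecidableEq G] where
  k : ℕ
  w : ℕ
  h : ℕ
  P : ℕ → ℕ → ℕ
  T : RTAS BWG G
  f : ℕ → ℕ → Tile BWG G
  hD : DirectedTAS T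
  hb : countColor T BWG.black ≤ 1
  hg : countColor T BWG.gray ≤ 2 * k + 3
  hf : IsAssignment T (QW k w) (QH k h) f
  hco : ∀ X < QW k w, ∀ Y < QH k h, (f X Y).color = QPat k w h P X Y
  hk : 1 ≤ k
  hw : 2 ≤ w
  hh : 2 ≤ h
  hP : ∀ x < w, ∀ y < h, 1 ≤ P x y ∧ P x y ≤ k

namespace Setup

variable {G : Type} [DecidableEq G] (S : Setup G)

/-- The supertile side length. -/
def L : ℕ := 5 * S.k + 8

lemma hL : 13 ≤ S.L := by have := S.hk; simp only [L]; omega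

lemma hLk : S.L = 5 * S.k + 8 := rfl

lemma hLw : S.L * 2 ≤ S.L * S.w := Nat.mul_le_mul_left _ S.hw
lemma hLh : S.L * 2 ≤ S.L * S.h := Nat.mul_le_mul_left _ S.hh

lemma hQW : QW S.k S.w = S.L * S.w + 2 := by
  simp only [QW, hLk, Nat.mul_comm]

lemma hQH : QH S.k S.h = S.L * S.h + 2 := by
  simp only [QH, hLk, Nat.mul_comm]

lemma mem {X Y : ℕ} (hX : X < S.L * S.w + 2) (hY : Y < S.L * S.h + 2) :
    S.f X Y ∈ S.T.tiles := by
  have := S.hf.1 X (by rw [S.hQW]; omega) Y (by rw [S.hQH]; omega)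
  exact this

lemma color {X Y : ℕ} (hX : X < S.L * S.w + 2) (hY : Y < S.L * S.h + 2) :
    (S.f X Y).color = QPat S.k S.w S.h S.P X Y := by
  exact S.hco X (by rw [S.hQW]; omega) Y (by rw [S.hQH]; omega)

lemma adjW {X Y : ℕ} (hX : X + 1 < S.L * S.w + 2) (hY : Y < S.L * S.h + 2) :
    (S.f (X + 1) Y).west = (S.f X Y).east :=
  S.hf.2.2.2.1 X (by rw [S.hQW]; omega) Y (by rw [S.hQH]; omega)

lemma adjS {X Y : ℕ} (hX : X < S.L * S.w + 2) (hY : Y + 1 < S.L * S.h + 2) :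
    (S.f X (Y + 1)).south = (S.f X Y).north :=
  S.hf.2.2.2.2 X (by rw [S.hQW]; omega) Y (by rw [S.hQH]; omega)

lemma uniq {u v : Tile BWG G} (hu : u ∈ S.T.tiles) (hv : v ∈ S.T.tiles)
    (hs : u.south = v.south) (hwe : u.west = v.west) : u = v := by
  by_contra hne
  rcases S.hD u hu v hv hne with h | h
  · exact h hs
  · exact h hwe

/-- The tile of a supertile at inner coordinates. -/
def st (x y i j : ℕ) : Tile BWG G := S.f (x * S.L + i - 1) (y * S.L + j - 1)

lemma le_mulL {x : ℕ} (hx : 1 ≤ x) : S.L ≤ x * S.L := by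
  calc S.L = 1 * S.L := (one_mul _).symm
  _ ≤ x * S.L := Nat.mul_le_mul_right _ hx

lemma glob_lt {x i n : ℕ} (hx : x < n) (hi : i < S.L) : x * S.L + i < S.L * n := by
  have h1 : x * S.L + S.L = (x + 1) * S.L := (Nat.succ_mul x S.L).symm
  have h2 : (x + 1) * S.L ≤ n * S.L := Nat.mul_le_mul_right _ hx
  have h3 : n * S.L = S.L * n := Nat.mul_comm _ _
  omega

lemma st_mem {x y i j : ℕ} (hx : x < S.w) (hy : y < S.h) (hi : i < S.L) (hj : j < S.L) :
    S.st x y i j ∈ S.T.tiles := by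
  have h1 := S.glob_lt hx hi
  have h2 := S.glob_lt hy hj
  exact S.mem (by omega) (by omega)

lemma st_color {x y i j : ℕ} (hx : x < S.w) (hy : y < S.h) (hi : i < S.L) (hj : j < S.L)
    (hxi : 1 ≤ x ∨ 1 ≤ i) (hyj : 1 ≤ y ∨ 1 ≤ j) :
    (S.st x y i j).color = superPat S.L (S.P x y) i j := by
  have hL := S.hL
  have hxL : 1 ≤ x → S.L ≤ x * S.L := S.le_mulL
  have hyL : 1 ≤ y → S.L ≤ y * S.L := S.le_mulL
  have h1 : 1 ≤ x * S.L + i := by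
    rcases hxi with h | h
    · have := hxL h; omega
    · omega
  have h2 : 1 ≤ y * S.L + j := by
    rcases hyj with h | h
    · have := hyL h; omega
    · omega
  have hXw := S.glob_lt hx hi
  have hYh := S.glob_lt hy hj
  rw [st, S.color (by omega) (by omega)]
  have e1 : x * S.L + i - 1 + 1 = i + S.L * x := by
    have := Nat.mul_comm x S.L; omega
  have e2 : y * S.L + j - 1 + 1 = j + S.L * y := by
    have := Nat.mul_comm y S.L; omega
  have d1 : (i + S.L * x) / S.L = x := by
    rw [Nat.add_mul_div_left _ _ (by omega : 0 < S.L), Nat.div_eq_of_lt hi]; omega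
  have d2 : (j + S.L * y) / S.L = y := by
    rw [Nat.add_mul_div_left _ _ (by omega : 0 < S.L), Nat.div_eq_of_lt hj]; omega
  have m1 : (i + S.L * x) % S.L = i := by
    rw [Nat.add_mul_mod_self_left, Nat.mod_eq_of_lt hi]
  have m2 : (j + S.L * y) % S.L = j := by
    rw [Nat.add_mul_mod_self_left, Nat.mod_eq_of_lt hj]
  have hb1 : i + S.L * x < (5 * S.k + 8) * S.w := by
    rw [← hLk]; have := Nat.mul_comm x S.L; omega
  have hb2 : j + S.L * y < (5 * S.k + 8) * S.h := by
    rw [← hLk]; have := Nat.mul_comm y S.L; omega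
  simp only [QPat, e1, e2]
  rw [if_pos ⟨hb1, hb2⟩]
  rw [← hLk] at *
  rw [d1, d2, m1, m2]


/-! ### superPat evaluation -/

lemma sp_bot {l c i : ℕ} : superPat l c i 0 = BWG.white := by simp [superPat]

lemma sp_left {l c j : ℕ} : superPat l c 0 j = BWG.white := by
  unfold superPat; split_ifs <;> simp_all

lemma sp_black {l c i j : ℕ} (hl : 2 ≤ l) (h1 : 1 ≤ i) (h2 : i ≤ l - 2)
    (h3 : 1 ≤ j) (h4 : j ≤ l - 2) : superPat l c i j = BWG.black := by
  unfold superPat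
  rw [if_neg (by omega), if_neg (by omega), if_neg (by omega), if_neg (by omega)]

lemma sp_top {l c i : ℕ} (hl : 2 ≤ l) (h1 : 1 ≤ i) :
    superPat l c i (l - 1) = if i = c + 1 then BWG.white else BWG.gray := by
  unfold superPat
  rw [if_neg (by omega), if_neg (by omega), if_pos rfl]

lemma sp_right {l c j : ℕ} (hl : 3 ≤ l) (h3 : 1 ≤ j) (h4 : j ≤ l - 2) :
    superPat l c (l - 1) j = if j = c + 1 then BWG.white else BWG.gray := by
  unfold superPat
  rw [if_neg (by omega), if_neg (by omega), if_neg (by omega), if_pos rfl]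

/-! ### QPat gadget evaluation -/

lemma g_mid {X : ℕ} (hX : X + 1 < S.L * S.w) :
    (S.f X (S.L * S.h)).color = if X = S.k then BWG.white else BWG.gray := by
  have hL := S.hL; have hLh := S.hLh
  rw [S.color (by omega) (by omega)]
  simp only [QPat, ← hLk]
  rw [if_neg (by omega), if_pos hX, if_pos trivial]

lemma g_row {X Y : ℕ} (hX : X + 1 < S.L * S.w)
    (hY : Y = S.L * S.h - 1 ∨ Y = S.L * S.h + 1) :
    (S.f X Y).color = if (X + 1) % S.L = S.L - 1 then BWG.gray else BWG.black := by
  have hL := S.hL; have hLh := S.hLh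
  rw [S.color (by omega) (by omega)]
  simp only [QPat, ← hLk]
  have h1 : ¬(Y + 1 < S.L * S.h) := by omega
  have h2 : Y ≠ S.L * S.h := by omega
  simp only [hX, h1, h2, true_and, and_false, false_and, if_false, if_true, ↓reduceIte]
  congr 1

lemma g_colV {Y : ℕ} (hY : Y + 1 < S.L * S.h) :
    (S.f (S.L * S.w) Y).color = if Y = S.k then BWG.white else BWG.gray := by
  have hL := S.hL; have hLw := S.hLw
  rw [S.color (by omega) (by omega)]
  simp only [QPat, ← hLk]
  rw [if_neg (by omega), if_neg (by omega), if_pos hY, if_pos trivial]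

lemma g_col {X Y : ℕ} (hY : Y + 1 < S.L * S.h)
    (hX : X = S.L * S.w - 1 ∨ X = S.L * S.w + 1) :
    (S.f X Y).color = if (Y + 1) % S.L = S.L - 1 then BWG.gray else BWG.black := by
  have hL := S.hL; have hLw := S.hLw
  rw [S.color (by omega) (by omega)]
  simp only [QPat, ← hLk]
  have h1 : ¬(X + 1 < S.L * S.w) := by omega
  have h2 : X ≠ S.L * S.w := by omega
  simp only [hY, h1, h2, true_and, and_false, false_and, if_false, if_true, ↓reduceIte]
  congr 1

/-! ### the black tile -/

def bT : Tile BWG G := S.f 1 1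
def gn : G := S.bT.north
def ge : G := S.bT.east

lemma st0022 : S.st 0 0 2 2 = S.bT := by simp [st, bT]

lemma bT_color : S.bT.color = BWG.black := by
  have hL := S.hL; have hw := S.hw; have hh := S.hh
  rw [← st0022, S.st_color (by omega) (by omega) (by omega) (by omega) (by omega) (by omega)]
  exact sp_black (by omega) (by omega) (by omega) (by omega) (by omega)

lemma bT_mem : S.bT ∈ S.T.tiles := by
  have hL := S.hL; have hLw := S.hLw; have hLh := S.hLh
  exact S.mem (by omega) (by omega)

lemma blackEq {X Y : ℕ} (hX : X < S.L * S.w + 2) (hY : Y < S.L * S.h + 2)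
    (hc : (S.f X Y).color = BWG.black) : S.f X Y = S.bT := by
  have hb' : (S.T.tiles.filter (fun t => t.color = BWG.black)).card ≤ 1 := S.hb
  exact Finset.card_le_one.1 hb' _ (Finset.mem_filter.2 ⟨S.mem hX hY, hc⟩) _
    (Finset.mem_filter.2 ⟨S.bT_mem, S.bT_color⟩)

lemma st_blackEq {x y i j : ℕ} (hx : x < S.w) (hy : y < S.h) (hi : 1 ≤ i) (hi2 : i ≤ S.L - 2)
    (hj : 1 ≤ j) (hj2 : j ≤ S.L - 2) : S.st x y i j = S.bT := by
  have hL := S.hL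
  have h1 := S.glob_lt hx (show i < S.L by omega)
  have h2 := S.glob_lt hy (show j < S.L by omega)
  refine S.blackEq (by omega) (by omega) ?_
  rw [show S.f (x * S.L + i - 1) (y * S.L + j - 1) = S.st x y i j from rfl,
    S.st_color hx hy (by omega) (by omega) (by omega) (by omega)]
  exact sp_black (by omega) hi hi2 hj hj2

lemma bNS : S.bT.south = S.gn := by
  have hL := S.hL; have hLw := S.hLw; have hLh := S.hLh
  have hw := S.hw; have hh := S.hh
  have e : (S.f 1 2).south = (S.f 1 1).north := S.adjS (by omega) (by omega)
  have e2 : S.f 1 2 = S.bT := by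
    have : S.f 1 2 = S.st 0 0 2 3 := by simp [st]
    rw [this]
    exact S.st_blackEq (by omega) (by omega) (by omega) (by omega) (by omega) (by omega)
  rw [e2] at e; exact e

lemma bWE : S.bT.west = S.ge := by
  have hL := S.hL; have hLw := S.hLw; have hLh := S.hLh
  have hw := S.hw; have hh := S.hh
  have e : (S.f 2 1).west = (S.f 1 1).east := S.adjW (by omega) (by omega)
  have e2 : S.f 2 1 = S.bT := by
    have : S.f 2 1 = S.st 0 0 3 2 := by simp [st]
    rw [this]
    exact S.st_blackEq (by omega) (by omega) (by omega) (by omega) (by omega) (by omega)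
  rw [e2] at e; exact e

lemma notB {u : Tile BWG G} (hu : u ∈ S.T.tiles) (hc : u.color ≠ BWG.black)
    (hs : u.south = S.gn) (hwe : u.west = S.ge) : False := by
  have : u = S.bT := S.uniq hu S.bT_mem (hs.trans S.bNS.symm) (hwe.trans S.bWE.symm)
  rw [this] at hc; exact hc S.bT_color


/-! ### the horizontal and vertical gadget chains -/

def hT (X : ℕ) : Tile BWG G := S.f X (S.L * S.h)
def vT (Y : ℕ) : Tile BWG G := S.f (S.L * S.w) Y

lemma hT_mem {X : ℕ} (hX : X ≤ S.L - 3) : S.hT X ∈ S.T.tiles := by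
  have hL := S.hL; have hLw := S.hLw; have hLh := S.hLh
  exact S.mem (by omega) (by omega)

lemma vT_mem {Y : ℕ} (hY : Y ≤ S.L - 3) : S.vT Y ∈ S.T.tiles := by
  have hL := S.hL; have hLw := S.hLw; have hLh := S.hLh
  exact S.mem (by omega) (by omega)

lemma hT_color {X : ℕ} (hX : X ≤ S.L - 3) :
    (S.hT X).color = if X = S.k then BWG.white else BWG.gray := by
  have hL := S.hL; have hLw := S.hLw
  exact S.g_mid (by omega)

lemma vT_color {Y : ℕ} (hY : Y ≤ S.L - 3) :
    (S.vT Y).color = if Y = S.k then BWG.white else BWG.gray := by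
  have hL := S.hL; have hLh := S.hLh
  exact S.g_colV (by omega)

lemma hT_nb {X : ℕ} (hX : X ≤ S.L - 3) : (S.hT X).color ≠ BWG.black := by
  rw [S.hT_color hX]; split_ifs <;> simp

lemma vT_nb {Y : ℕ} (hY : Y ≤ S.L - 3) : (S.vT Y).color ≠ BWG.black := by
  rw [S.vT_color hY]; split_ifs <;> simp

lemma hT_south {X : ℕ} (hX : X ≤ S.L - 3) : (S.hT X).south = S.gn := by
  have hL := S.hL; have hLw := S.hLw; have hLh := S.hLh
  have e : (S.f X (S.L * S.h - 1 + 1)).south = (S.f X (S.L * S.h - 1)).north :=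
    S.adjS (by omega) (by omega)
  rw [show S.L * S.h - 1 + 1 = S.L * S.h by omega] at e
  have hb : S.f X (S.L * S.h - 1) = S.bT := by
    refine S.blackEq (by omega) (by omega) ?_
    rw [S.g_row (by omega) (Or.inl rfl), Nat.mod_eq_of_lt (by omega), if_neg (by omega)]
  rw [hT, e, hb]; rfl

lemma hT_north {X : ℕ} (hX : X ≤ S.L - 3) : (S.hT X).north = S.gn := by
  have hL := S.hL; have hLw := S.hLw; have hLh := S.hLh
  have e : (S.f X (S.L * S.h + 1)).south = (S.f X (S.L * S.h)).north :=
    S.adjS (by omega) (by omega)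
  have hb : S.f X (S.L * S.h + 1) = S.bT := by
    refine S.blackEq (by omega) (by omega) ?_
    rw [S.g_row (by omega) (Or.inr rfl), Nat.mod_eq_of_lt (by omega), if_neg (by omega)]
  rw [hb] at e
  rw [hT, ← e, S.bNS]

lemma vT_west {Y : ℕ} (hY : Y ≤ S.L - 3) : (S.vT Y).west = S.ge := by
  have hL := S.hL; have hLw := S.hLw; have hLh := S.hLh
  have e : (S.f (S.L * S.w - 1 + 1) Y).west = (S.f (S.L * S.w - 1) Y).east :=
    S.adjW (by omega) (by omega)
  rw [show S.L * S.w - 1 + 1 = S.L * S.w by omega] at e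
  have hb : S.f (S.L * S.w - 1) Y = S.bT := by
    refine S.blackEq (by omega) (by omega) ?_
    rw [S.g_col (by omega) (Or.inl rfl), Nat.mod_eq_of_lt (by omega), if_neg (by omega)]
  rw [vT, e, hb]; rfl

lemma vT_east {Y : ℕ} (hY : Y ≤ S.L - 3) : (S.vT Y).east = S.ge := by
  have hL := S.hL; have hLw := S.hLw; have hLh := S.hLh
  have e : (S.f (S.L * S.w + 1) Y).west = (S.f (S.L * S.w) Y).east :=
    S.adjW (by omega) (by omega)
  have hb : S.f (S.L * S.w + 1) Y = S.bT := by
    refine S.blackEq (by omega) (by omega) ?_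
    rw [S.g_col (by omega) (Or.inr rfl), Nat.mod_eq_of_lt (by omega), if_neg (by omega)]
  rw [hb] at e
  rw [vT, ← e, S.bWE]

lemma hT_west_ne {X : ℕ} (hX : X ≤ S.L - 3) : (S.hT X).west ≠ S.ge :=
  fun hwe => S.notB (S.hT_mem hX) (S.hT_nb hX) (S.hT_south hX) hwe

lemma vT_south_ne {Y : ℕ} (hY : Y ≤ S.L - 3) : (S.vT Y).south ≠ S.gn :=
  fun hs => S.notB (S.vT_mem hY) (S.vT_nb hY) hs (S.vT_west hY)

lemma hT_stepW {X : ℕ} (hX : X + 1 ≤ S.L - 3) : (S.hT (X + 1)).west = (S.hT X).east := by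
  have hL := S.hL; have hLw := S.hLw; have hLh := S.hLh
  exact S.adjW (by omega) (by omega)

lemma vT_stepS {Y : ℕ} (hY : Y + 1 ≤ S.L - 3) : (S.vT (Y + 1)).south = (S.vT Y).north := by
  have hL := S.hL; have hLw := S.hLw; have hLh := S.hLh
  exact S.adjS (by omega) (by omega)

lemma hT_east_ne {X : ℕ} (hX : X + 1 ≤ S.L - 3) : (S.hT X).east ≠ S.ge := by
  intro he
  exact S.notB (S.hT_mem (X := X + 1) (by omega)) (S.hT_nb (X := X + 1) (by omega))
    (S.hT_south (X := X + 1) (by omega)) (by rw [S.hT_stepW hX, he])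

lemma vT_north_ne {Y : ℕ} (hY : Y + 1 ≤ S.L - 3) : (S.vT Y).north ≠ S.gn := by
  intro hn
  exact S.notB (S.vT_mem (Y := Y + 1) (by omega)) (S.vT_nb (Y := Y + 1) (by omega))
    (by rw [S.vT_stepS hY, hn]) (S.vT_west (Y := Y + 1) (by omega))

lemma hT_step {X : ℕ} (hX : X + 1 ≤ S.L - 3) {u : Tile BWG G} (hu : u ∈ S.T.tiles)
    (hs : u.south = S.gn) (hwe : u.west = (S.hT X).east) : u = S.hT (X + 1) :=
  S.uniq hu (S.hT_mem (by omega)) (by rw [hs, S.hT_south (by omega)])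
    (by rw [hwe, S.hT_stepW hX])

lemma vT_step {Y : ℕ} (hY : Y + 1 ≤ S.L - 3) {u : Tile BWG G} (hu : u ∈ S.T.tiles)
    (hs : u.south = (S.vT Y).north) (hwe : u.west = S.ge) : u = S.vT (Y + 1) :=
  S.uniq hu (S.vT_mem (by omega)) (by rw [hs, S.vT_stepS hY])
    (by rw [hwe, S.vT_west (by omega)])

lemma hT_prop {a b : ℕ} (hab : a ≤ b) (he : S.hT a = S.hT b) :
    ∀ m, b + m ≤ S.L - 3 → S.hT (a + m) = S.hT (b + m) := by
  intro m
  induction m with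
  | zero => intro _; simpa using he
  | succ n ih =>
    intro hm
    have ihh := ih (by omega)
    have e1 : a + (n + 1) = a + n + 1 := by omega
    have e2 : b + (n + 1) = b + n + 1 := by omega
    rw [e1, e2]
    refine S.hT_step (by omega) (S.hT_mem (by omega)) (S.hT_south (by omega)) ?_
    rw [S.hT_stepW (by omega), ihh]

lemma vT_prop {a b : ℕ} (hab : a ≤ b) (he : S.vT a = S.vT b) :
    ∀ m, b + m ≤ S.L - 3 → S.vT (a + m) = S.vT (b + m) := by
  intro m
  induction m with
  | zero => intro _; simpa using he
  | succ n ih =>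
    intro hm
    have ihh := ih (by omega)
    have e1 : a + (n + 1) = a + n + 1 := by omega
    have e2 : b + (n + 1) = b + n + 1 := by omega
    rw [e1, e2]
    refine S.vT_step (by omega) (S.vT_mem (by omega)) ?_ (S.vT_west (by omega))
    rw [S.vT_stepS (by omega), ihh]

lemma hT_ne {a b : ℕ} (hab : a < b) (hbk : b ≤ S.k + 1) : S.hT a ≠ S.hT b := by
  intro he
  have hLL : S.L = 5 * S.k + 8 := rfl
  by_cases hbk2 : b ≤ S.k
  · have hp := S.hT_prop (le_of_lt hab) he (S.k - b) (by omega)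
    rw [show b + (S.k - b) = S.k by omega] at hp
    have c1 := S.hT_color (X := a + (S.k - b)) (by omega)
    rw [hp, if_neg (by omega)] at c1
    have c2 := S.hT_color (X := S.k) (by omega)
    rw [if_pos rfl] at c2
    rw [c2] at c1; exact BWG.noConfusion c1
  · have hb' : b = S.k + 1 := by omega
    subst hb'
    by_cases hak : a = S.k
    · subst hak
      have c1 := S.hT_color (X := S.k) (by omega)
      rw [if_pos rfl, he] at c1
      have c2 := S.hT_color (X := S.k + 1) (by omega)
      rw [if_neg (by omega)] at c2
      rw [c2] at c1; exact BWG.noConfusion c1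
    · have hp := S.hT_prop (le_of_lt hab) he (S.k - a) (by omega)
      rw [show a + (S.k - a) = S.k by omega] at hp
      have c1 := S.hT_color (X := S.k) (by omega)
      rw [if_pos rfl, hp] at c1
      have c2 := S.hT_color (X := S.k + 1 + (S.k - a)) (by omega)
      rw [if_neg (by omega)] at c2
      rw [c2] at c1; exact BWG.noConfusion c1

lemma vT_ne {a b : ℕ} (hab : a < b) (hbk : b ≤ S.k + 1) : S.vT a ≠ S.vT b := by
  intro he
  have hLL : S.L = 5 * S.k + 8 := rfl
  by_cases hbk2 : b ≤ S.k
  · have hp := S.vT_prop (le_of_lt hab) he (S.k - b) (by omega)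
    rw [show b + (S.k - b) = S.k by omega] at hp
    have c1 := S.vT_color (Y := a + (S.k - b)) (by omega)
    rw [hp, if_neg (by omega)] at c1
    have c2 := S.vT_color (Y := S.k) (by omega)
    rw [if_pos rfl] at c2
    rw [c2] at c1; exact BWG.noConfusion c1
  · have hb' : b = S.k + 1 := by omega
    subst hb'
    by_cases hak : a = S.k
    · subst hak
      have c1 := S.vT_color (Y := S.k) (by omega)
      rw [if_pos rfl, he] at c1
      have c2 := S.vT_color (Y := S.k + 1) (by omega)
      rw [if_neg (by omega)] at c2
      rw [c2] at c1; exact BWG.noConfusion c1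
    · have hp := S.vT_prop (le_of_lt hab) he (S.k - a) (by omega)
      rw [show a + (S.k - a) = S.k by omega] at hp
      have c1 := S.vT_color (Y := S.k) (by omega)
      rw [if_pos rfl, hp] at c1
      have c2 := S.vT_color (Y := S.k + 1 + (S.k - a)) (by omega)
      rw [if_neg (by omega)] at c2
      rw [c2] at c1; exact BWG.noConfusion c1

lemma hT_ne' {a b : ℕ} (hab : a ≠ b) (ha : a ≤ S.k + 1) (hb : b ≤ S.k + 1) :
    S.hT a ≠ S.hT b := by
  rcases Nat.lt_or_ge a b with h | h
  · exact S.hT_ne h hb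
  · exact fun he => S.hT_ne (by omega) ha he.symm

lemma vT_ne' {a b : ℕ} (hab : a ≠ b) (ha : a ≤ S.k + 1) (hb : b ≤ S.k + 1) :
    S.vT a ≠ S.vT b := by
  rcases Nat.lt_or_ge a b with h | h
  · exact S.vT_ne h hb
  · exact fun he => S.vT_ne (by omega) ha he.symm

lemma hvT_ne {a b : ℕ} (ha : a ≤ S.L - 3) (hb : b ≤ S.L - 3) : S.hT a ≠ S.vT b :=
  fun he => S.notB (S.hT_mem ha) (S.hT_nb ha) (S.hT_south ha) (by rw [he, S.vT_west hb])

/-! ### the gray tile budget -/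

/-- `u` is one of the `2k+2` "listed" gray counter tile types. -/
def Lst (u : Tile BWG G) : Prop :=
  (∃ m, (m < S.k ∨ m = S.k + 1) ∧ u = S.hT m) ∨
    (∃ m, (m < S.k ∨ m = S.k + 1) ∧ u = S.vT m)

lemma jle {m : ℕ} (hm : m < S.k ∨ m = S.k + 1) : m ≤ S.L - 3 := by
  have : S.L = 5 * S.k + 8 := rfl; omega

lemma jle1 {m : ℕ} (hm : m < S.k ∨ m = S.k + 1) : m + 1 ≤ S.L - 3 := by
  have : S.L = 5 * S.k + 8 := rfl; omega

/-- At most one gray tile type is not listed. -/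
lemma budget {g1 g2 : Tile BWG G} (h1 : g1 ∈ S.T.tiles) (c1 : g1.color = BWG.gray)
    (n1 : ¬ S.Lst g1) (h2 : g2 ∈ S.T.tiles) (c2 : g2.color = BWG.gray)
    (n2 : ¬ S.Lst g2) : g1 = g2 := by
  by_contra hne
  classical
  have hLL : S.L = 5 * S.k + 8 := rfl
  set em : ℕ → ℕ := fun i => if i = S.k then S.k + 1 else i with hem
  have emJ : ∀ i ≤ S.k, em i < S.k ∨ em i = S.k + 1 := by
    intro i hi; simp only [hem]; split_ifs with hh
    · right; rfl
    · left; omega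
  have emInj : ∀ i ≤ S.k, ∀ j ≤ S.k, em i = em j → i = j := by
    intro i hi j hj; simp only [hem]; split_ifs <;> omega
  have emLe : ∀ i ≤ S.k, em i ≤ S.k + 1 := by
    intro i hi; simp only [hem]; split_ifs <;> omega
  set F : ℕ → Tile BWG G := fun m =>
    if hm : m ≤ S.k then S.hT (em m)
    else if hm2 : m ≤ 2 * S.k + 1 then S.vT (em (m - (S.k + 1)))
    else if m = 2 * S.k + 2 then g1 else g2 with hF
  have key : ∀ a b, a < b → b < 2 * S.k + 4 → F a ≠ F b := by
    intro a b hab hb hfe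
    simp only [hF] at hfe
    by_cases a1 : a ≤ S.k
    · rw [dif_pos a1] at hfe
      by_cases b1 : b ≤ S.k
      · rw [dif_pos b1] at hfe
        exact S.hT_ne' (fun he => absurd (emInj _ a1 _ b1 he) (by omega)) (emLe _ a1) (emLe _ b1) hfe
      · rw [dif_neg b1] at hfe
        by_cases b2 : b ≤ 2 * S.k + 1
        · rw [dif_pos b2] at hfe
          exact S.hvT_ne (S.jle (emJ _ a1)) (S.jle (emJ _ (by omega))) hfe
        · rw [dif_neg b2] at hfe
          split_ifs at hfe
          · exact n1 (Or.inl ⟨em a, emJ _ a1, hfe.symm⟩)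
          · exact n2 (Or.inl ⟨em a, emJ _ a1, hfe.symm⟩)
    · rw [dif_neg a1] at hfe
      by_cases a2 : a ≤ 2 * S.k + 1
      · rw [dif_pos a2] at hfe
        by_cases b1 : b ≤ S.k
        · omega
        · rw [dif_neg b1] at hfe
          by_cases b2 : b ≤ 2 * S.k + 1
          · rw [dif_pos b2] at hfe
            refine S.vT_ne' ?_ (emLe _ (by omega)) (emLe _ (by omega)) hfe
            intro he
            have := emInj _ (by omega) _ (by omega) he
            omega
          · rw [dif_neg b2] at hfe
            split_ifs at hfe
            · exact n1 (Or.inr ⟨em (a - (S.k + 1)), emJ _ (by omega), hfe.symm⟩)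
            · exact n2 (Or.inr ⟨em (a - (S.k + 1)), emJ _ (by omega), hfe.symm⟩)
      · rw [dif_neg a2] at hfe
        have hb1 : ¬ b ≤ S.k := by omega
        have hb2 : ¬ b ≤ 2 * S.k + 1 := by omega
        rw [dif_neg hb1, dif_neg hb2] at hfe
        have ha3 : a = 2 * S.k + 2 := by omega
        have hb3 : b = 2 * S.k + 3 := by omega
        rw [if_pos ha3, if_neg (by omega)] at hfe
        exact hne hfe
  have hmaps : ∀ m ∈ Finset.range (2 * S.k + 4),
      F m ∈ S.T.tiles.filter (fun t => t.color = BWG.gray) := by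
    intro m hm
    simp only [Finset.mem_range] at hm
    simp only [hF]
    by_cases a1 : m ≤ S.k
    · rw [dif_pos a1]
      refine Finset.mem_filter.2 ⟨S.hT_mem (S.jle (emJ _ a1)), ?_⟩
      rw [S.hT_color (S.jle (emJ _ a1)), if_neg (by rcases emJ _ a1 with hh | hh <;> omega)]
    · rw [dif_neg a1]
      by_cases a2 : m ≤ 2 * S.k + 1
      · rw [dif_pos a2]
        refine Finset.mem_filter.2 ⟨S.vT_mem (S.jle (emJ _ (by omega))), ?_⟩
        rw [S.vT_color (S.jle (emJ _ (by omega))),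
          if_neg (by rcases emJ _ (show m - (S.k+1) ≤ S.k by omega) with hh | hh <;> omega)]
      · rw [dif_neg a2]
        split_ifs
        · exact Finset.mem_filter.2 ⟨h1, c1⟩
        · exact Finset.mem_filter.2 ⟨h2, c2⟩
  have hinj : Set.InjOn F (Finset.range (2 * S.k + 4)) := by
    intro a ha b hb hfe
    simp only [Finset.coe_range, Set.mem_Iio] at ha hb
    by_contra hne2
    rcases Nat.lt_or_ge a b with hh | hh
    · exact key a b hh hb hfe
    · exact key b a (by omega) ha hfe.symm
  have hcard := Finset.card_le_card_of_injOn F hmaps hinj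
  rw [Finset.card_range] at hcard
  have hg : (S.T.tiles.filter (fun t => t.color = BWG.gray)).card ≤ 2 * S.k + 3 := S.hg
  omega


/-! ### supertile adjacency and colors -/

lemma st_adjW {x y i j : ℕ} (hx : x < S.w) (hy : y < S.h) (hi : i + 1 < S.L) (hj : j < S.L)
    (h1 : 1 ≤ x ∨ 1 ≤ i) (h2 : 1 ≤ y ∨ 1 ≤ j) :
    (S.st x y (i + 1) j).west = (S.st x y i j).east := by
  have hL := S.hL
  have hb1 := S.glob_lt hx (show i + 1 < S.L from hi)
  have hb2 := S.glob_lt hy hj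
  have hx1 : 1 ≤ x → S.L ≤ x * S.L := S.le_mulL
  have hy1 : 1 ≤ y → S.L ≤ y * S.L := S.le_mulL
  have hxi : 1 ≤ x * S.L + i := by
    rcases h1 with hh | hh
    · have := hx1 hh; omega
    · omega
  have hyj : 1 ≤ y * S.L + j := by
    rcases h2 with hh | hh
    · have := hy1 hh; omega
    · omega
  have e : x * S.L + (i + 1) - 1 = (x * S.L + i - 1) + 1 := by omega
  rw [st, st, e]
  exact S.adjW (by omega) (by omega)

lemma st_adjS {x y i j : ℕ} (hx : x < S.w) (hy : y < S.h) (hi : i < S.L) (hj : j + 1 < S.L)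
    (h1 : 1 ≤ x ∨ 1 ≤ i) (h2 : 1 ≤ y ∨ 1 ≤ j) :
    (S.st x y i (j + 1)).south = (S.st x y i j).north := by
  have hL := S.hL
  have hb1 := S.glob_lt hx hi
  have hb2 := S.glob_lt hy (show j + 1 < S.L from hj)
  have hx1 : 1 ≤ x → S.L ≤ x * S.L := S.le_mulL
  have hy1 : 1 ≤ y → S.L ≤ y * S.L := S.le_mulL
  have hxi : 1 ≤ x * S.L + i := by
    rcases h1 with hh | hh
    · have := hx1 hh; omega
    · omega
  have hyj : 1 ≤ y * S.L + j := by
    rcases h2 with hh | hh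
    · have := hy1 hh; omega
    · omega
  have e : y * S.L + (j + 1) - 1 = (y * S.L + j - 1) + 1 := by omega
  rw [st, st, e]
  exact S.adjS (by omega) (by omega)

lemma st_adjW_cross {x y j : ℕ} (hx1 : 1 ≤ x) (hx : x < S.w) (hy : y < S.h) (hj : j < S.L)
    (h2 : 1 ≤ y ∨ 1 ≤ j) :
    (S.st x y 0 j).west = (S.st (x - 1) y (S.L - 1) j).east := by
  have hL := S.hL
  obtain ⟨x', rfl⟩ : ∃ x', x = x' + 1 := ⟨x - 1, by omega⟩
  have hsm : (x' + 1) * S.L = x' * S.L + S.L := Nat.succ_mul _ _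
  have hb1 := S.glob_lt hx (show S.L - 1 < S.L by omega)
  have hb1' : x' * S.L + (S.L - 1) < S.L * S.w := by
    have : x' * S.L + (S.L - 1) ≤ (x' + 1) * S.L + (S.L - 1) := by omega
    omega
  have hb2 := S.glob_lt hy hj
  have hy1 : 1 ≤ y → S.L ≤ y * S.L := S.le_mulL
  have hyj : 1 ≤ y * S.L + j := by
    rcases h2 with hh | hh
    · have := hy1 hh; omega
    · omega
  have e : (x' + 1) * S.L + 0 - 1 = (x' * S.L + (S.L - 1) - 1) + 1 := by omega
  rw [st, st, e]
  rw [show x' + 1 - 1 = x' by omega]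
  exact S.adjW (by omega) (by omega)

lemma st_adjS_cross {x y i : ℕ} (hy1 : 1 ≤ y) (hx : x < S.w) (hy : y < S.h) (hi : i < S.L)
    (h1 : 1 ≤ x ∨ 1 ≤ i) :
    (S.st x y i 0).south = (S.st x (y - 1) i (S.L - 1)).north := by
  have hL := S.hL
  obtain ⟨y', rfl⟩ : ∃ y', y = y' + 1 := ⟨y - 1, by omega⟩
  have hsm : (y' + 1) * S.L = y' * S.L + S.L := Nat.succ_mul _ _
  have hb2 := S.glob_lt hy (show S.L - 1 < S.L by omega)
  have hb2' : y' * S.L + (S.L - 1) < S.L * S.h := by omega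
  have hb1 := S.glob_lt hx hi
  have hx1 : 1 ≤ x → S.L ≤ x * S.L := S.le_mulL
  have hxi : 1 ≤ x * S.L + i := by
    rcases h1 with hh | hh
    · have := hx1 hh; omega
    · omega
  have e : (y' + 1) * S.L + 0 - 1 = (y' * S.L + (S.L - 1) - 1) + 1 := by omega
  rw [st, st, e]
  rw [show y' + 1 - 1 = y' by omega]
  exact S.adjS (by omega) (by omega)

lemma st_white_bot {x y i : ℕ} (hx : x < S.w) (hy : y < S.h) (hi : i < S.L) (hy1 : 1 ≤ y)
    (hxi : 1 ≤ x ∨ 1 ≤ i) : (S.st x y i 0).color = BWG.white := by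
  rw [S.st_color hx hy hi (by have := S.hL; omega) hxi (Or.inl hy1)]
  exact sp_bot

lemma st_white_left {x y j : ℕ} (hx : x < S.w) (hy : y < S.h) (hj : j < S.L) (hx1 : 1 ≤ x)
    (hyj : 1 ≤ y ∨ 1 ≤ j) : (S.st x y 0 j).color = BWG.white := by
  rw [S.st_color hx hy (by have := S.hL; omega) hj (Or.inl hx1) hyj]
  exact sp_left

lemma st_top_color {x y i : ℕ} (hx : x < S.w) (hy : y < S.h) (h1 : 1 ≤ i) (hi : i < S.L) :
    (S.st x y i (S.L - 1)).color = if i = S.P x y + 1 then BWG.white else BWG.gray := by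
  have hL := S.hL
  rw [S.st_color hx hy hi (by omega) (Or.inr h1) (Or.inr (by omega))]
  exact sp_top (by omega) h1

lemma st_right_color {x y j : ℕ} (hx : x < S.w) (hy : y < S.h) (h1 : 1 ≤ j)
    (hj : j ≤ S.L - 2) :
    (S.st x y (S.L - 1) j).color = if j = S.P x y + 1 then BWG.white else BWG.gray := by
  have hL := S.hL
  rw [S.st_color hx hy (by omega) (by omega) (Or.inr (by omega)) (Or.inr h1)]
  exact sp_right (by omega) h1 hj

lemma rg_gray {x y i : ℕ} (hx : x < S.w) (hy : y < S.h) (h1 : 1 ≤ i) (hi : i < S.L)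
    (hne : i ≠ S.P x y + 1) : (S.st x y i (S.L - 1)).color = BWG.gray := by
  rw [S.st_top_color hx hy h1 hi, if_neg hne]

lemma cg_gray {x y j : ℕ} (hx : x < S.w) (hy : y < S.h) (h1 : 1 ≤ j) (hj : j ≤ S.L - 2)
    (hne : j ≠ S.P x y + 1) : (S.st x y (S.L - 1) j).color = BWG.gray := by
  rw [S.st_right_color hx hy h1 hj, if_neg hne]

lemma rg_south {x y i : ℕ} (hx : x < S.w) (hy : y < S.h) (h1 : 1 ≤ i) (hi : i ≤ S.L - 2) :
    (S.st x y i (S.L - 1)).south = S.gn := by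
  have hL := S.hL
  have e : (S.st x y i (S.L - 2 + 1)).south = (S.st x y i (S.L - 2)).north :=
    S.st_adjS hx hy (by omega) (by omega) (Or.inr h1) (Or.inr (by omega))
  rw [show S.L - 2 + 1 = S.L - 1 by omega] at e
  rw [e, S.st_blackEq hx hy h1 hi (by omega) (by omega)]
  rfl

lemma cg_west {x y j : ℕ} (hx : x < S.w) (hy : y < S.h) (h1 : 1 ≤ j) (hj : j ≤ S.L - 2) :
    (S.st x y (S.L - 1) j).west = S.ge := by
  have hL := S.hL
  have e : (S.st x y (S.L - 2 + 1) j).west = (S.st x y (S.L - 2) j).east :=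
    S.st_adjW hx hy (by omega) (by omega) (Or.inr (by omega)) (Or.inr h1)
  rw [show S.L - 2 + 1 = S.L - 1 by omega] at e
  rw [e, S.st_blackEq hx hy (by omega) (by omega) h1 hj]
  rfl

/-! ### the absorbing counter tiles -/

lemma cP00 : 1 ≤ S.P 0 0 ∧ S.P 0 0 ≤ S.k := S.hP 0 (by have := S.hw; omega) 0 (by have := S.hh; omega)

lemma corner00_gray : (S.st 0 0 (S.L - 1) (S.L - 1)).color = BWG.gray := by
  have hL := S.hL; have hc := S.cP00; have hLL : S.L = 5 * S.k + 8 := rfl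
  rw [S.st_top_color (by have := S.hw; omega) (by have := S.hh; omega) (by omega) (by omega)]
  rw [if_neg (by omega)]

lemma v_absorb : S.vT (S.k + 2) = S.vT (S.k + 1) := by
  have hL := S.hL; have hLL : S.L = 5 * S.k + 8 := rfl
  have hw := S.hw; have hh := S.hh; have hc := S.cP00
  have hA_mem : S.vT (S.k + 2) ∈ S.T.tiles := S.vT_mem (by omega)
  have hA_gray : (S.vT (S.k + 2)).color = BWG.gray := by
    rw [S.vT_color (by omega), if_neg (by omega)]
  have hA_west : (S.vT (S.k + 2)).west = S.ge := S.vT_west (by omega)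
  by_cases hLst : S.Lst (S.vT (S.k + 2))
  · rcases hLst with ⟨m, hm, he⟩ | ⟨m, hm, he⟩
    · exact absurd he.symm (S.hvT_ne (S.jle hm) (by omega))
    · rcases hm with hm | hm
      · exfalso
        have hp := S.vT_prop (a := m) (b := S.k + 2) (by omega) he.symm (S.k - m) (by omega)
        rw [show m + (S.k - m) = S.k by omega] at hp
        have c1 := S.vT_color (Y := S.k) (by omega)
        rw [if_pos rfl, hp] at c1
        have c2 := S.vT_color (Y := S.k + 2 + (S.k - m)) (by omega)
        rw [if_neg (by omega)] at c2
        rw [c2] at c1; exact BWG.noConfusion c1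
      · rw [hm] at he; exact he
  · exfalso
    -- corner complex at supertile (0,0)
    set wl := S.st 0 0 (S.L - 2) (S.L - 1) with hwl
    set vb := S.st 0 0 (S.L - 1) (S.L - 2) with hvb
    set kap := S.st 0 0 (S.L - 1) (S.L - 1) with hkap
    have hx0 : (0 : ℕ) < S.w := by omega
    have hy0 : (0 : ℕ) < S.h := by omega
    have wl_mem : wl ∈ S.T.tiles := S.st_mem hx0 hy0 (by omega) (by omega)
    have vb_mem : vb ∈ S.T.tiles := S.st_mem hx0 hy0 (by omega) (by omega)
    have kap_mem : kap ∈ S.T.tiles := S.st_mem hx0 hy0 (by omega) (by omega)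
    have wl_gray : wl.color = BWG.gray := S.rg_gray hx0 hy0 (by omega) (by omega) (by omega)
    have vb_gray : vb.color = BWG.gray := S.cg_gray hx0 hy0 (by omega) (by omega) (by omega)
    have kap_gray : kap.color = BWG.gray := S.corner00_gray
    have wl_south : wl.south = S.gn := S.rg_south hx0 hy0 (by omega) (by omega)
    have vb_west : vb.west = S.ge := S.cg_west hx0 hy0 (by omega) (by omega)
    have kapW : kap.west = wl.east := by
      have e := S.st_adjW (x := 0) (y := 0) (i := S.L - 2) (j := S.L - 1) hx0 hy0 (by omega)
        (by omega) (Or.inr (by omega)) (Or.inr (by omega))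
      rw [show S.L - 2 + 1 = S.L - 1 by omega] at e
      exact e
    have kapS : kap.south = vb.north := by
      have e := S.st_adjS (x := 0) (y := 0) (i := S.L - 1) (j := S.L - 2) hx0 hy0 (by omega)
        (by omega) (Or.inr (by omega)) (Or.inr (by omega))
      rw [show S.L - 2 + 1 = S.L - 1 by omega] at e
      exact e
    -- wl is a listed horizontal tile
    have wl_H : ∃ m, (m < S.k ∨ m = S.k + 1) ∧ wl = S.hT m := by
      by_cases hL2 : S.Lst wl
      · rcases hL2 with hh2 | ⟨m, hm, he⟩
        · exact hh2
        · exact absurd (he ▸ wl_south) (S.vT_south_ne (S.jle hm))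
      · exfalso
        have := S.budget wl_mem wl_gray hL2 hA_mem hA_gray hLst
        rw [this] at wl_south
        exact S.notB hA_mem (by rw [hA_gray]; simp) wl_south hA_west
    obtain ⟨mw, hmw, hwlH⟩ := wl_H
    have kapW_ne : kap.west ≠ S.ge := by
      rw [kapW, hwlH]; exact S.hT_east_ne (S.jle1 hmw)
    -- kap is a listed horizontal tile
    have kap_H : ∃ m, (m < S.k ∨ m = S.k + 1) ∧ kap = S.hT m := by
      by_cases hL2 : S.Lst kap
      · rcases hL2 with hh2 | ⟨m, hm, he⟩
        · exact hh2
        · exact absurd (he ▸ S.vT_west (S.jle hm)) kapW_ne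
      · exfalso
        have := S.budget kap_mem kap_gray hL2 hA_mem hA_gray hLst
        exact kapW_ne (by rw [this, hA_west])
    obtain ⟨mk, hmk, hkapH⟩ := kap_H
    have vbN : vb.north = S.gn := by
      rw [← kapS, hkapH]; exact S.hT_south (S.jle hmk)
    -- vb cannot be anything
    by_cases hL2 : S.Lst vb
    · rcases hL2 with ⟨m, hm, he⟩ | ⟨m, hm, he⟩
      · exact S.hT_west_ne (S.jle hm) (he ▸ vb_west)
      · exact S.vT_north_ne (S.jle1 hm) (he ▸ vbN)
    · have := S.budget vb_mem vb_gray hL2 hA_mem hA_gray hLst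
      have hN : (S.vT (S.k + 2)).north = S.gn := by rw [← this, vbN]
      refine S.notB (S.vT_mem (Y := S.k + 3) (by omega)) (S.vT_nb (Y := S.k + 3) (by omega))
        ?_ (S.vT_west (Y := S.k + 3) (by omega))
      rw [S.vT_stepS (by omega), hN]

lemma h_absorb : S.hT (S.k + 2) = S.hT (S.k + 1) := by
  have hL := S.hL; have hLL : S.L = 5 * S.k + 8 := rfl
  have hw := S.hw; have hh := S.hh; have hc := S.cP00
  have hA_mem : S.hT (S.k + 2) ∈ S.T.tiles := S.hT_mem (by omega)
  have hA_gray : (S.hT (S.k + 2)).color = BWG.gray := by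
    rw [S.hT_color (by omega), if_neg (by omega)]
  have hA_south : (S.hT (S.k + 2)).south = S.gn := S.hT_south (by omega)
  have hA_west : (S.hT (S.k + 2)).west = (S.hT (S.k + 1)).east := S.hT_stepW (by omega)
  by_cases hLst : S.Lst (S.hT (S.k + 2))
  · rcases hLst with ⟨m, hm, he⟩ | ⟨m, hm, he⟩
    · rcases hm with hm | hm
      · exfalso
        have hp := S.hT_prop (a := m) (b := S.k + 2) (by omega) he.symm (S.k - m) (by omega)
        rw [show m + (S.k - m) = S.k by omega] at hp
        have c1 := S.hT_color (X := S.k) (by omega)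
        rw [if_pos rfl, hp] at c1
        have c2 := S.hT_color (X := S.k + 2 + (S.k - m)) (by omega)
        rw [if_neg (by omega)] at c2
        rw [c2] at c1; exact BWG.noConfusion c1
      · rw [hm] at he; exact he
    · exact absurd (he ▸ hA_south) (S.vT_south_ne (S.jle hm))
  · exfalso
    set wl := S.st 0 0 (S.L - 2) (S.L - 1) with hwl
    set vb := S.st 0 0 (S.L - 1) (S.L - 2) with hvb
    set kap := S.st 0 0 (S.L - 1) (S.L - 1) with hkap
    have hx0 : (0 : ℕ) < S.w := by omega
    have hy0 : (0 : ℕ) < S.h := by omega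
    have wl_mem : wl ∈ S.T.tiles := S.st_mem hx0 hy0 (by omega) (by omega)
    have vb_mem : vb ∈ S.T.tiles := S.st_mem hx0 hy0 (by omega) (by omega)
    have kap_mem : kap ∈ S.T.tiles := S.st_mem hx0 hy0 (by omega) (by omega)
    have wl_gray : wl.color = BWG.gray := S.rg_gray hx0 hy0 (by omega) (by omega) (by omega)
    have vb_gray : vb.color = BWG.gray := S.cg_gray hx0 hy0 (by omega) (by omega) (by omega)
    have kap_gray : kap.color = BWG.gray := S.corner00_gray
    have wl_south : wl.south = S.gn := S.rg_south hx0 hy0 (by omega) (by omega)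
    have vb_west : vb.west = S.ge := S.cg_west hx0 hy0 (by omega) (by omega)
    have kapW : kap.west = wl.east := by
      have e := S.st_adjW (x := 0) (y := 0) (i := S.L - 2) (j := S.L - 1) hx0 hy0 (by omega)
        (by omega) (Or.inr (by omega)) (Or.inr (by omega))
      rw [show S.L - 2 + 1 = S.L - 1 by omega] at e
      exact e
    have kapS : kap.south = vb.north := by
      have e := S.st_adjS (x := 0) (y := 0) (i := S.L - 1) (j := S.L - 2) hx0 hy0 (by omega)
        (by omega) (Or.inr (by omega)) (Or.inr (by omega))
      rw [show S.L - 2 + 1 = S.L - 1 by omega] at e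
      exact e
    have hA_west_ne : (S.hT (S.k + 2)).west ≠ S.ge := by
      rw [hA_west]; exact S.hT_east_ne (by omega)
    -- vb is a listed vertical tile
    have vb_V : ∃ m, (m < S.k ∨ m = S.k + 1) ∧ vb = S.vT m := by
      by_cases hL2 : S.Lst vb
      · rcases hL2 with ⟨m, hm, he⟩ | hh2
        · exact absurd (he ▸ vb_west) (S.hT_west_ne (S.jle hm))
        · exact hh2
      · exfalso
        have := S.budget vb_mem vb_gray hL2 hA_mem hA_gray hLst
        exact hA_west_ne (by rw [← this, vb_west])
    obtain ⟨mv, hmv, hvbV⟩ := vb_V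
    have kapS_ne : kap.south ≠ S.gn := by
      rw [kapS, hvbV]; exact S.vT_north_ne (S.jle1 hmv)
    -- kap is a listed vertical tile
    have kap_V : ∃ m, (m < S.k ∨ m = S.k + 1) ∧ kap = S.vT m := by
      by_cases hL2 : S.Lst kap
      · rcases hL2 with ⟨m, hm, he⟩ | hh2
        · exact absurd (he ▸ S.hT_south (S.jle hm)) kapS_ne
        · exact hh2
      · exfalso
        have := S.budget kap_mem kap_gray hL2 hA_mem hA_gray hLst
        exact kapS_ne (by rw [this, hA_south])
    obtain ⟨mk, hmk, hkapV⟩ := kap_V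
    have wlE : wl.east = S.ge := by
      rw [← kapW, hkapV]; exact S.vT_west (S.jle hmk)
    -- wl cannot be anything
    by_cases hL2 : S.Lst wl
    · rcases hL2 with ⟨m, hm, he⟩ | ⟨m, hm, he⟩
      · exact S.hT_east_ne (S.jle1 hm) (he ▸ wlE)
      · exact S.vT_south_ne (S.jle hm) (he ▸ wl_south)
    · have := S.budget wl_mem wl_gray hL2 hA_mem hA_gray hLst
      have hE : (S.hT (S.k + 2)).east = S.ge := by rw [← this, wlE]
      exact S.hT_east_ne (X := S.k + 2) (by omega) hE

/-! ### the absorbing glues -/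

def eta : G := (S.hT (S.k + 1)).west
def nu : G := (S.vT (S.k + 1)).south

lemma hk1_east : (S.hT (S.k + 1)).east = S.eta := by
  have hLL : S.L = 5 * S.k + 8 := rfl
  have e := S.hT_stepW (X := S.k + 1) (by omega)
  rw [S.h_absorb] at e
  rw [← e]; rfl

lemma vk1_north : (S.vT (S.k + 1)).north = S.nu := by
  have hLL : S.L = 5 * S.k + 8 := rfl
  have e := S.vT_stepS (Y := S.k + 1) (by omega)
  rw [S.v_absorb] at e
  exact e.symm

lemma vk_north : (S.vT S.k).north = S.nu := by
  have hLL : S.L = 5 * S.k + 8 := rfl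
  have e := S.vT_stepS (Y := S.k) (by omega)
  rw [← e]; rfl

lemma wT_east : (S.hT S.k).east = S.eta := by
  have hLL : S.L = 5 * S.k + 8 := rfl
  have e := S.hT_stepW (X := S.k) (by omega)
  rw [← e]; rfl

lemma eta_ne : S.eta ≠ S.ge := by
  have hLL : S.L = 5 * S.k + 8 := rfl
  exact S.hT_west_ne (by omega)

lemma nu_ne : S.nu ≠ S.gn := by
  have hLL : S.L = 5 * S.k + 8 := rfl
  exact S.vT_south_ne (by omega)

lemma tile_eta {u : Tile BWG G} (hu : u ∈ S.T.tiles) (hs : u.south = S.gn)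
    (hwe : u.west = S.eta) : u = S.hT (S.k + 1) := by
  have hLL : S.L = 5 * S.k + 8 := rfl
  exact S.uniq hu (S.hT_mem (by omega)) (by rw [hs, S.hT_south (by omega)]) (by rw [hwe]; rfl)

lemma tile_nu {u : Tile BWG G} (hu : u ∈ S.T.tiles) (hs : u.south = S.nu)
    (hwe : u.west = S.ge) : u = S.vT (S.k + 1) := by
  have hLL : S.L = 5 * S.k + 8 := rfl
  exact S.uniq hu (S.vT_mem (by omega)) (by rw [hs]; rfl) (by rw [hwe, S.vT_west (by omega)])


/-! ### the corner complex at supertile (0,0) -/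

def wl0 : Tile BWG G := S.st 0 0 (S.L - 2) (S.L - 1)
def vb0 : Tile BWG G := S.st 0 0 (S.L - 1) (S.L - 2)
def kap0 : Tile BWG G := S.st 0 0 (S.L - 1) (S.L - 1)

lemma hx0 : (0 : ℕ) < S.w := by have := S.hw; omega
lemma hy0 : (0 : ℕ) < S.h := by have := S.hh; omega

lemma wl0_mem : S.wl0 ∈ S.T.tiles := by
  have hL := S.hL; exact S.st_mem S.hx0 S.hy0 (by omega) (by omega)
lemma vb0_mem : S.vb0 ∈ S.T.tiles := by
  have hL := S.hL; exact S.st_mem S.hx0 S.hy0 (by omega) (by omega)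
lemma kap0_mem : S.kap0 ∈ S.T.tiles := by
  have hL := S.hL; exact S.st_mem S.hx0 S.hy0 (by omega) (by omega)

lemma wl0_gray : S.wl0.color = BWG.gray := by
  have hL := S.hL; have hc := S.cP00; have hLL : S.L = 5 * S.k + 8 := rfl
  exact S.rg_gray S.hx0 S.hy0 (by omega) (by omega) (by omega)
lemma vb0_gray : S.vb0.color = BWG.gray := by
  have hL := S.hL; have hc := S.cP00; have hLL : S.L = 5 * S.k + 8 := rfl
  exact S.cg_gray S.hx0 S.hy0 (by omega) (by omega) (by omega)
lemma kap0_gray : S.kap0.color = BWG.gray := S.corner00_gray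

lemma wl0_south : S.wl0.south = S.gn := by
  have hL := S.hL; exact S.rg_south S.hx0 S.hy0 (by omega) (by omega)
lemma vb0_west : S.vb0.west = S.ge := by
  have hL := S.hL; exact S.cg_west S.hx0 S.hy0 (by omega) (by omega)

lemma kap0_adjW : S.kap0.west = S.wl0.east := by
  have hL := S.hL
  have e := S.st_adjW (x := 0) (y := 0) (i := S.L - 2) (j := S.L - 1) S.hx0 S.hy0 (by omega)
    (by omega) (Or.inr (by omega)) (Or.inr (by omega))
  rw [show S.L - 2 + 1 = S.L - 1 by omega] at e
  exact e

lemma kap0_adjS : S.kap0.south = S.vb0.north := by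
  have hL := S.hL
  have e := S.st_adjS (x := 0) (y := 0) (i := S.L - 1) (j := S.L - 2) S.hx0 S.hy0 (by omega)
    (by omega) (Or.inr (by omega)) (Or.inr (by omega))
  rw [show S.L - 2 + 1 = S.L - 1 by omega] at e
  exact e

/-! ### classification of the row and column grays -/

lemma CL_R {x y i : ℕ} (hx : x < S.w) (hy : y < S.h) (h1 : 1 ≤ i) (h2 : i ≤ S.L - 3)
    (hne : i ≠ S.P x y + 1) :
    ∃ m, (m < S.k ∨ m = S.k + 1) ∧ S.st x y i (S.L - 1) = S.hT m := by
  have hL := S.hL; have hLL : S.L = 5 * S.k + 8 := rfl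
  set g := S.st x y i (S.L - 1) with hg
  have g_mem : g ∈ S.T.tiles := S.st_mem hx hy (by omega) (by omega)
  have g_gray : g.color = BWG.gray := S.rg_gray hx hy h1 (by omega) hne
  have g_south : g.south = S.gn := S.rg_south hx hy h1 (by omega)
  by_contra hno
  have g_unl : ¬ S.Lst g := by
    rintro (⟨m, hm, he⟩ | ⟨m, hm, he⟩)
    · exact hno ⟨m, hm, he⟩
    · exact S.vT_south_ne (S.jle hm) (he ▸ g_south)
  have vb_V : ∃ m, (m < S.k ∨ m = S.k + 1) ∧ S.vb0 = S.vT m := by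
    by_cases hL2 : S.Lst S.vb0
    · rcases hL2 with ⟨m, hm, he⟩ | hh2
      · exact absurd (he ▸ S.vb0_west) (S.hT_west_ne (S.jle hm))
      · exact hh2
    · exfalso
      have heq := S.budget S.vb0_mem S.vb0_gray hL2 g_mem g_gray g_unl
      exact S.notB g_mem (by rw [g_gray]; simp) g_south (by rw [← heq, S.vb0_west])
  obtain ⟨mv, hmv, hvbV⟩ := vb_V
  have kapS_ne : S.kap0.south ≠ S.gn := by
    rw [S.kap0_adjS, hvbV]; exact S.vT_north_ne (S.jle1 hmv)
  have kap_V : ∃ m, (m < S.k ∨ m = S.k + 1) ∧ S.kap0 = S.vT m := by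
    by_cases hL2 : S.Lst S.kap0
    · rcases hL2 with ⟨m, hm, he⟩ | hh2
      · exact absurd (he ▸ S.hT_south (S.jle hm)) kapS_ne
      · exact hh2
    · exfalso
      have heq := S.budget S.kap0_mem S.kap0_gray hL2 g_mem g_gray g_unl
      exact kapS_ne (by rw [heq, g_south])
  obtain ⟨mk, hmk, hkapV⟩ := kap_V
  have wlE : S.wl0.east = S.ge := by
    rw [← S.kap0_adjW, hkapV]; exact S.vT_west (S.jle hmk)
  have wl_g : S.wl0 = g := by
    by_cases hL2 : S.Lst S.wl0
    · exfalso
      rcases hL2 with ⟨m, hm, he⟩ | ⟨m, hm, he⟩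
      · exact S.hT_east_ne (S.jle1 hm) (he ▸ wlE)
      · exact S.vT_south_ne (S.jle hm) (he ▸ S.wl0_south)
    · exact S.budget S.wl0_mem S.wl0_gray hL2 g_mem g_gray g_unl
  have gE : g.east = S.ge := by rw [← wl_g, wlE]
  have tauW : (S.st x y (i + 1) (S.L - 1)).west = S.ge := by
    rw [S.st_adjW hx hy (by omega) (by omega) (Or.inr h1) (Or.inr (by omega)), ← hg, gE]
  have tauS : (S.st x y (i + 1) (S.L - 1)).south = S.gn :=
    S.rg_south hx hy (by omega) (by omega)
  have tauC : (S.st x y (i + 1) (S.L - 1)).color ≠ BWG.black := by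
    rw [S.st_top_color hx hy (by omega) (by omega)]
    split_ifs <;> simp
  exact S.notB (S.st_mem hx hy (by omega) (by omega)) tauC tauS tauW

lemma CL_C {x y j : ℕ} (hx : x < S.w) (hy : y < S.h) (h1 : 1 ≤ j) (h2 : j ≤ S.L - 3)
    (hne : j ≠ S.P x y + 1) :
    ∃ m, (m < S.k ∨ m = S.k + 1) ∧ S.st x y (S.L - 1) j = S.vT m := by
  have hL := S.hL; have hLL : S.L = 5 * S.k + 8 := rfl
  set g := S.st x y (S.L - 1) j with hg
  have g_mem : g ∈ S.T.tiles := S.st_mem hx hy (by omega) (by omega)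
  have g_gray : g.color = BWG.gray := S.cg_gray hx hy h1 (by omega) hne
  have g_west : g.west = S.ge := S.cg_west hx hy h1 (by omega)
  by_contra hno
  have g_unl : ¬ S.Lst g := by
    rintro (⟨m, hm, he⟩ | ⟨m, hm, he⟩)
    · exact S.hT_west_ne (S.jle hm) (he ▸ g_west)
    · exact hno ⟨m, hm, he⟩
  have wl_H : ∃ m, (m < S.k ∨ m = S.k + 1) ∧ S.wl0 = S.hT m := by
    by_cases hL2 : S.Lst S.wl0
    · rcases hL2 with hh2 | ⟨m, hm, he⟩
      · exact hh2
      · exact absurd (he ▸ S.wl0_south) (S.vT_south_ne (S.jle hm))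
    · exfalso
      have heq := S.budget S.wl0_mem S.wl0_gray hL2 g_mem g_gray g_unl
      exact S.notB S.wl0_mem (by rw [S.wl0_gray]; simp) S.wl0_south (by rw [heq, g_west])
  obtain ⟨mw, hmw, hwlH⟩ := wl_H
  have kapW_ne : S.kap0.west ≠ S.ge := by
    rw [S.kap0_adjW, hwlH]; exact S.hT_east_ne (S.jle1 hmw)
  have kap_H : ∃ m, (m < S.k ∨ m = S.k + 1) ∧ S.kap0 = S.hT m := by
    by_cases hL2 : S.Lst S.kap0
    · rcases hL2 with hh2 | ⟨m, hm, he⟩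
      · exact hh2
      · exact absurd (he ▸ S.vT_west (S.jle hm)) kapW_ne
    · exfalso
      have heq := S.budget S.kap0_mem S.kap0_gray hL2 g_mem g_gray g_unl
      exact kapW_ne (by rw [heq, g_west])
  obtain ⟨mk, hmk, hkapH⟩ := kap_H
  have vbN : S.vb0.north = S.gn := by
    rw [← S.kap0_adjS, hkapH]; exact S.hT_south (S.jle hmk)
  have vb_g : S.vb0 = g := by
    by_cases hL2 : S.Lst S.vb0
    · exfalso
      rcases hL2 with ⟨m, hm, he⟩ | ⟨m, hm, he⟩
      · exact S.hT_west_ne (S.jle hm) (he ▸ S.vb0_west)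
      · exact S.vT_north_ne (S.jle1 hm) (he ▸ vbN)
    · exact S.budget S.vb0_mem S.vb0_gray hL2 g_mem g_gray g_unl
  have gN : g.north = S.gn := by rw [← vb_g, vbN]
  have tauS : (S.st x y (S.L - 1) (j + 1)).south = S.gn := by
    rw [S.st_adjS hx hy (by omega) (by omega) (Or.inr (by omega)) (Or.inr h1), ← hg, gN]
  have tauW : (S.st x y (S.L - 1) (j + 1)).west = S.ge :=
    S.cg_west hx hy (by omega) (by omega)
  have tauC : (S.st x y (S.L - 1) (j + 1)).color ≠ BWG.black := by
    rw [S.st_right_color hx hy (by omega) (by omega)]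
    split_ifs <;> simp
  exact S.notB (S.st_mem hx hy (by omega) (by omega)) tauC tauS tauW


/-! ### the counters in the top rows and right columns of supertiles -/

lemma ct_row {x y : ℕ} (hx : x < S.w) (hy : y < S.h) :
    (∀ i, 1 ≤ i → i ≤ S.P x y + 1 →
      S.st x y i (S.L - 1) = S.hT (S.k - S.P x y + i - 1)) ∧
    (∀ i, S.P x y + 2 ≤ i → i ≤ S.L - 2 → S.st x y i (S.L - 1) = S.hT (S.k + 1)) := by
  have hL := S.hL; have hLL : S.L = 5 * S.k + 8 := rfl
  have hc := S.hP x hx y hy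
  set c := S.P x y with hcdef
  obtain ⟨j0, hj0, hbase⟩ := S.CL_R hx hy (i := 1) (by omega) (by omega) (by omega)
  have hj0le : j0 ≤ S.k + 1 := by rcases hj0 with hh | hh <;> omega
  have key : ∀ n, 1 + n ≤ c + 1 → S.st x y (1 + n) (S.L - 1) = S.hT (j0 + n) := by
    intro n
    induction n with
    | zero => intro _; simpa using hbase
    | succ m ih =>
      intro hm
      have ihh := ih (by omega)
      have e := S.st_adjW (i := 1 + m) (j := S.L - 1) hx hy (by omega) (by omega)
        (Or.inr (by omega)) (Or.inr (by omega))
      show S.st x y (1 + m + 1) (S.L - 1) = S.hT (j0 + m + 1)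
      exact S.hT_step (X := j0 + m) (by omega) (S.st_mem hx hy (by omega) (by omega))
        (S.rg_south hx hy (by omega) (by omega)) (by rw [e, ihh])
  have hD2 := key c (by omega)
  have hwcol : (S.st x y (1 + c) (S.L - 1)).color = BWG.white := by
    rw [show (1 + c) = c + 1 by omega, S.st_top_color hx hy (by omega) (by omega),
      if_pos rfl]
  have hj0c : j0 + c = S.k := by
    by_contra hne2
    have hcc := S.hT_color (X := j0 + c) (by omega)
    rw [if_neg hne2] at hcc
    rw [hD2] at hwcol
    exact BWG.noConfusion (hwcol.symm.trans hcc)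
  constructor
  · intro i hi1 hi2
    have hkey := key (i - 1) (by omega)
    rw [show 1 + (i - 1) = i by omega] at hkey
    rw [hkey]
    congr 1
    omega
  · have hstep1 : S.st x y (c + 2) (S.L - 1) = S.hT (S.k + 1) := by
      refine S.hT_step (X := S.k) (by omega) (S.st_mem hx hy (by omega) (by omega))
        (S.rg_south hx hy (by omega) (by omega)) ?_
      have e := S.st_adjW (i := c + 1) (j := S.L - 1) hx hy (by omega) (by omega)
        (Or.inr (by omega)) (Or.inr (by omega))
      rw [show c + 2 = c + 1 + 1 by omega, e, show c + 1 = 1 + c by omega, hD2, hj0c]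
    have key2 : ∀ n, c + 2 + n ≤ S.L - 2 → S.st x y (c + 2 + n) (S.L - 1) = S.hT (S.k + 1) := by
      intro n
      induction n with
      | zero => intro _; simpa using hstep1
      | succ m ih =>
        intro hm
        have ihh := ih (by omega)
        have e := S.st_adjW (i := c + 2 + m) (j := S.L - 1) hx hy (by omega) (by omega)
          (Or.inr (by omega)) (Or.inr (by omega))
        show S.st x y (c + 2 + m + 1) (S.L - 1) = S.hT (S.k + 1)
        rw [← S.h_absorb]
        exact S.hT_step (X := S.k + 1) (by omega)
          (S.st_mem hx hy (by omega) (by omega))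
          (S.rg_south hx hy (by omega) (by omega)) (by rw [e, ihh])
    intro i hi1 hi2
    have hkey := key2 (i - (c + 2)) (by omega)
    rw [show c + 2 + (i - (c + 2)) = i by omega] at hkey
    exact hkey

lemma ct_col {x y : ℕ} (hx : x < S.w) (hy : y < S.h) :
    (∀ j, 1 ≤ j → j ≤ S.P x y + 1 →
      S.st x y (S.L - 1) j = S.vT (S.k - S.P x y + j - 1)) ∧
    (∀ j, S.P x y + 2 ≤ j → j ≤ S.L - 2 → S.st x y (S.L - 1) j = S.vT (S.k + 1)) := by
  have hL := S.hL; have hLL : S.L = 5 * S.k + 8 := rfl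
  have hc := S.hP x hx y hy
  set c := S.P x y with hcdef
  obtain ⟨j0, hj0, hbase⟩ := S.CL_C hx hy (j := 1) (by omega) (by omega) (by omega)
  have hj0le : j0 ≤ S.k + 1 := by rcases hj0 with hh | hh <;> omega
  have key : ∀ n, 1 + n ≤ c + 1 → S.st x y (S.L - 1) (1 + n) = S.vT (j0 + n) := by
    intro n
    induction n with
    | zero => intro _; simpa using hbase
    | succ m ih =>
      intro hm
      have ihh := ih (by omega)
      have e := S.st_adjS (i := S.L - 1) (j := 1 + m) hx hy (by omega) (by omega)
        (Or.inr (by omega)) (Or.inr (by omega))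
      show S.st x y (S.L - 1) (1 + m + 1) = S.vT (j0 + m + 1)
      exact S.vT_step (Y := j0 + m) (by omega) (S.st_mem hx hy (by omega) (by omega))
        (by rw [e, ihh]) (S.cg_west hx hy (by omega) (by omega))
  have hD1 := key c (by omega)
  have hwcol : (S.st x y (S.L - 1) (1 + c)).color = BWG.white := by
    rw [show (1 + c) = c + 1 by omega, S.st_right_color hx hy (by omega) (by omega),
      if_pos rfl]
  have hj0c : j0 + c = S.k := by
    by_contra hne2
    have hcc := S.vT_color (Y := j0 + c) (by omega)
    rw [if_neg hne2] at hcc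
    rw [hD1] at hwcol
    exact BWG.noConfusion (hwcol.symm.trans hcc)
  constructor
  · intro j hj1 hj2
    have hkey := key (j - 1) (by omega)
    rw [show 1 + (j - 1) = j by omega] at hkey
    rw [hkey]
    congr 1
    omega
  · have hstep1 : S.st x y (S.L - 1) (c + 2) = S.vT (S.k + 1) := by
      refine S.vT_step (Y := S.k) (by omega) (S.st_mem hx hy (by omega) (by omega)) ?_
        (S.cg_west hx hy (by omega) (by omega))
      have e := S.st_adjS (i := S.L - 1) (j := c + 1) hx hy (by omega) (by omega)
        (Or.inr (by omega)) (Or.inr (by omega))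
      rw [show c + 2 = c + 1 + 1 by omega, e, show c + 1 = 1 + c by omega, hD1, hj0c]
    have key2 : ∀ n, c + 2 + n ≤ S.L - 2 → S.st x y (S.L - 1) (c + 2 + n) = S.vT (S.k + 1) := by
      intro n
      induction n with
      | zero => intro _; simpa using hstep1
      | succ m ih =>
        intro hm
        have ihh := ih (by omega)
        have e := S.st_adjS (i := S.L - 1) (j := c + 2 + m) hx hy (by omega) (by omega)
          (Or.inr (by omega)) (Or.inr (by omega))
        show S.st x y (S.L - 1) (c + 2 + m + 1) = S.vT (S.k + 1)
        rw [← S.v_absorb]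
        exact S.vT_step (Y := S.k + 1) (by omega)
          (S.st_mem hx hy (by omega) (by omega)) (by rw [e, ihh])
          (S.cg_west hx hy (by omega) (by omega))
    intro j hj1 hj2
    have hkey := key2 (j - (c + 2)) (by omega)
    rw [show c + 2 + (j - (c + 2)) = j by omega] at hkey
    exact hkey

/-- Every `D₂` position carries the white counter tile `hT k`. -/
lemma D2_eq {x y : ℕ} (hx : x < S.w) (hy : y < S.h) :
    S.st x y (S.P x y + 1) (S.L - 1) = S.hT S.k := by
  have hc := S.hP x hx y hy
  have := (S.ct_row hx hy).1 (S.P x y + 1) (by omega) (by omega)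
  rw [this]
  congr 1
  omega

/-- Every `D₁` position carries the white counter tile `vT k`. -/
lemma D1_eq {x y : ℕ} (hx : x < S.w) (hy : y < S.h) :
    S.st x y (S.L - 1) (S.P x y + 1) = S.vT S.k := by
  have hc := S.hP x hx y hy
  have := (S.ct_col hx hy).1 (S.P x y + 1) (by omega) (by omega)
  rw [this]
  congr 1
  omega


/-! ### all supertile corners carry one and the same unlisted tile -/

lemma corner_gray {x y : ℕ} (hx : x < S.w) (hy : y < S.h) :
    (S.st x y (S.L - 1) (S.L - 1)).color = BWG.gray := by
  have hL := S.hL; have hLL : S.L = 5 * S.k + 8 := rfl; have hc := S.hP x hx y hy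
  rw [S.st_top_color hx hy (by omega) (by omega), if_neg (by omega)]

lemma kap_south {x y : ℕ} (hx : x < S.w) (hy : y < S.h) :
    (S.st x y (S.L - 1) (S.L - 1)).south = S.nu := by
  have hL := S.hL; have hLL : S.L = 5 * S.k + 8 := rfl; have hc := S.hP x hx y hy
  have hvb := (S.ct_col hx hy).2 (S.L - 2) (by omega) (by omega)
  have e := S.st_adjS (i := S.L - 1) (j := S.L - 2) hx hy (by omega) (by omega)
    (Or.inr (by omega)) (Or.inr (by omega))
  rw [show S.L - 2 + 1 = S.L - 1 by omega] at e
  rw [e, hvb, S.vk1_north]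

lemma kap_west {x y : ℕ} (hx : x < S.w) (hy : y < S.h) :
    (S.st x y (S.L - 1) (S.L - 1)).west = S.eta := by
  have hL := S.hL; have hLL : S.L = 5 * S.k + 8 := rfl; have hc := S.hP x hx y hy
  have hwl := (S.ct_row hx hy).2 (S.L - 2) (by omega) (by omega)
  have e := S.st_adjW (i := S.L - 2) (j := S.L - 1) hx hy (by omega) (by omega)
    (Or.inr (by omega)) (Or.inr (by omega))
  rw [show S.L - 2 + 1 = S.L - 1 by omega] at e
  rw [e, hwl, S.hk1_east]

lemma kap_unl {x y : ℕ} (hx : x < S.w) (hy : y < S.h) :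
    ¬ S.Lst (S.st x y (S.L - 1) (S.L - 1)) := by
  rintro (⟨m, hm, he⟩ | ⟨m, hm, he⟩)
  · have := S.kap_south hx hy
    rw [he, S.hT_south (S.jle hm)] at this
    exact S.nu_ne this.symm
  · have := S.kap_west hx hy
    rw [he, S.vT_west (S.jle hm)] at this
    exact S.eta_ne this.symm

lemma kap0_unl : ¬ S.Lst S.kap0 := S.kap_unl S.hx0 S.hy0

lemma kap0_south' : S.kap0.south = S.nu := S.kap_south S.hx0 S.hy0
lemma kap0_west' : S.kap0.west = S.eta := S.kap_west S.hx0 S.hy0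

lemma kap_eq {x y : ℕ} (hx : x < S.w) (hy : y < S.h) :
    S.st x y (S.L - 1) (S.L - 1) = S.kap0 := by
  have hL := S.hL
  exact S.budget (S.st_mem hx hy (by omega) (by omega)) (S.corner_gray hx hy)
    (S.kap_unl hx hy) S.kap0_mem S.kap0_gray S.kap0_unl

/-! ### the four glues of the corner tile -/

lemma kap0_north' : S.kap0.north = S.nu := by
  have hL := S.hL; have hLL : S.L = 5 * S.k + 8 := rfl
  have hw := S.hw; have hh := S.hh; have hLw := S.hLw; have hLh := S.hLh
  -- the corner of supertile (0, h-1) is kap0, at global position (L-2, L*h-2)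
  have hcor : S.st 0 (S.h - 1) (S.L - 1) (S.L - 1) = S.kap0 :=
    S.kap_eq S.hx0 (by omega)
  have hco : S.st 0 (S.h - 1) (S.L - 1) (S.L - 1) = S.f (S.L - 2) (S.L * S.h - 2) := by
    obtain ⟨h', hh'⟩ : ∃ h', S.h = h' + 1 := ⟨S.h - 1, by omega⟩
    have hcm : S.L * (h' + 1) = h' * S.L + S.L := by
      rw [Nat.mul_comm]; exact Nat.succ_mul _ _
    have hz : 0 * S.L = 0 := Nat.zero_mul _
    rw [st, hh']
    rw [show h' + 1 - 1 = h' from rfl]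
    congr 1
    · omega
    · omega
  have hK : S.f (S.L - 2) (S.L * S.h - 2) = S.kap0 := by rw [← hco, hcor]
  set gam := S.f (S.L - 2) (S.L * S.h - 1) with hgam
  have gam_mem : gam ∈ S.T.tiles := S.mem (by omega) (by omega)
  have gam_gray : gam.color = BWG.gray := by
    rw [hgam, S.g_row (by omega) (Or.inl rfl), show S.L - 2 + 1 = S.L - 1 by omega,
      Nat.mod_eq_of_lt (by omega), if_pos rfl]
  have gam_south : gam.south = S.kap0.north := by
    have e : (S.f (S.L - 2) (S.L * S.h - 2 + 1)).south = (S.f (S.L - 2) (S.L * S.h - 2)).north :=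
      S.adjS (by omega) (by omega)
    rw [show S.L * S.h - 2 + 1 = S.L * S.h - 1 by omega, hK] at e
    exact e
  have gam_west : gam.west = S.ge := by
    have e : (S.f (S.L - 3 + 1) (S.L * S.h - 1)).west = (S.f (S.L - 3) (S.L * S.h - 1)).east :=
      S.adjW (by omega) (by omega)
    have hbl : S.f (S.L - 3) (S.L * S.h - 1) = S.bT := by
      refine S.blackEq (by omega) (by omega) ?_
      rw [S.g_row (by omega) (Or.inl rfl), show S.L - 3 + 1 = S.L - 2 by omega,
        Nat.mod_eq_of_lt (by omega), if_neg (by omega)]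
    rw [show S.L - 3 + 1 = S.L - 2 by omega, hbl] at e
    exact e
  have gam_V : ∃ m, (m < S.k ∨ m = S.k + 1) ∧ gam = S.vT m := by
    by_cases hL2 : S.Lst gam
    · rcases hL2 with ⟨m, hm, he⟩ | hh2
      · exact absurd (he ▸ gam_west) (S.hT_west_ne (S.jle hm))
      · exact hh2
    · exfalso
      have heq := S.budget gam_mem gam_gray hL2 S.kap0_mem S.kap0_gray S.kap0_unl
      exact S.eta_ne (by rw [← S.kap0_west', ← heq, gam_west])
  obtain ⟨m, hm, hgV⟩ := gam_V
  have hkn : S.kap0.north = (S.vT m).south := by rw [← gam_south, hgV]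
  set del := S.f (S.L - 2) (S.L * S.h) with hdel
  have del_mem : del ∈ S.T.tiles := S.mem (by omega) (by omega)
  have del_gray : del.color = BWG.gray := by
    rw [hdel, S.g_mid (by omega), if_neg (by omega)]
  have del_south : del.south = gam.north := by
    have e : (S.f (S.L - 2) (S.L * S.h - 1 + 1)).south = (S.f (S.L - 2) (S.L * S.h - 1)).north :=
      S.adjS (by omega) (by omega)
    rw [show S.L * S.h - 1 + 1 = S.L * S.h by omega] at e
    exact e
  have eps_H : ∃ p, (p < S.k ∨ p = S.k + 1) ∧ S.hT (S.L - 3) = S.hT p := by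
    by_cases hL2 : S.Lst (S.hT (S.L - 3))
    · rcases hL2 with hh2 | ⟨p, hp, he⟩
      · exact hh2
      · exact absurd (he ▸ S.hT_south (by omega)) (S.vT_south_ne (S.jle hp))
    · exfalso
      have heq := S.budget (S.hT_mem (by omega)) (by
        rw [S.hT_color (by omega), if_neg (by omega)]) hL2 S.kap0_mem S.kap0_gray S.kap0_unl
      exact S.nu_ne (by rw [← S.kap0_south', ← heq, S.hT_south (by omega)])
  obtain ⟨p, hp, hepsH⟩ := eps_H
  have del_west_ne : del.west ≠ S.ge := by
    have e : (S.f (S.L - 3 + 1) (S.L * S.h)).west = (S.f (S.L - 3) (S.L * S.h)).east :=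
      S.adjW (by omega) (by omega)
    rw [show S.L - 3 + 1 = S.L - 2 by omega] at e
    rw [hdel, e, show S.f (S.L - 3) (S.L * S.h) = S.hT (S.L - 3) from rfl, hepsH]
    exact S.hT_east_ne (S.jle1 hp)
  have del_south_ne : del.south ≠ S.gn := by
    rw [del_south, hgV]; exact S.vT_north_ne (S.jle1 hm)
  have del_unl : ¬ S.Lst del := by
    rintro (⟨q, hq, he⟩ | ⟨q, hq, he⟩)
    · exact del_south_ne (he ▸ S.hT_south (S.jle hq))
    · exact del_west_ne (he ▸ S.vT_west (S.jle hq))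
  have del_kap : del = S.kap0 :=
    S.budget del_mem del_gray del_unl S.kap0_mem S.kap0_gray S.kap0_unl
  have hnum : S.nu = (S.vT m).north := by
    rw [← S.kap0_south', ← del_kap, del_south, hgV]
  have hmk : S.vT (m + 1) = S.vT (S.k + 1) := by
    refine S.tile_nu (S.vT_mem (S.jle1 hm)) ?_ (S.vT_west (S.jle1 hm))
    rw [S.vT_stepS (S.jle1 hm), ← hnum]
  have m_eq : m = S.k + 1 := by
    rcases hm with hm | hm
    · exact absurd hmk (S.vT_ne' (by omega) (by omega) (by omega))
    · exact hm
  rw [hkn, m_eq]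
  rfl

lemma kap0_east' : S.kap0.east = S.eta := by
  have hL := S.hL; have hLL : S.L = 5 * S.k + 8 := rfl
  have hw := S.hw; have hh := S.hh; have hLw := S.hLw; have hLh := S.hLh
  -- the corner of supertile (w-1, 0) is kap0, at global position (L*w-2, L-2)
  have hcor : S.st (S.w - 1) 0 (S.L - 1) (S.L - 1) = S.kap0 :=
    S.kap_eq (by omega) S.hy0
  have hco : S.st (S.w - 1) 0 (S.L - 1) (S.L - 1) = S.f (S.L * S.w - 2) (S.L - 2) := by
    obtain ⟨w', hw'⟩ : ∃ w', S.w = w' + 1 := ⟨S.w - 1, by omega⟩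
    have hcm : S.L * (w' + 1) = w' * S.L + S.L := by
      rw [Nat.mul_comm]; exact Nat.succ_mul _ _
    have hz : 0 * S.L = 0 := Nat.zero_mul _
    rw [st, hw']
    rw [show w' + 1 - 1 = w' from rfl]
    congr 1
    · omega
    · omega
  have hK : S.f (S.L * S.w - 2) (S.L - 2) = S.kap0 := by rw [← hco, hcor]
  set gam := S.f (S.L * S.w - 1) (S.L - 2) with hgam
  have gam_mem : gam ∈ S.T.tiles := S.mem (by omega) (by omega)
  have gam_gray : gam.color = BWG.gray := by
    rw [hgam, S.g_col (by omega) (Or.inl rfl), show S.L - 2 + 1 = S.L - 1 by omega,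
      Nat.mod_eq_of_lt (by omega), if_pos rfl]
  have gam_west : gam.west = S.kap0.east := by
    have e : (S.f (S.L * S.w - 2 + 1) (S.L - 2)).west = (S.f (S.L * S.w - 2) (S.L - 2)).east :=
      S.adjW (by omega) (by omega)
    rw [show S.L * S.w - 2 + 1 = S.L * S.w - 1 by omega, hK] at e
    exact e
  have gam_south : gam.south = S.gn := by
    have e : (S.f (S.L * S.w - 1) (S.L - 3 + 1)).south = (S.f (S.L * S.w - 1) (S.L - 3)).north :=
      S.adjS (by omega) (by omega)
    have hbl : S.f (S.L * S.w - 1) (S.L - 3) = S.bT := by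
      refine S.blackEq (by omega) (by omega) ?_
      rw [S.g_col (by omega) (Or.inl rfl), show S.L - 3 + 1 = S.L - 2 by omega,
        Nat.mod_eq_of_lt (by omega), if_neg (by omega)]
    rw [show S.L - 3 + 1 = S.L - 2 by omega, hbl] at e
    rw [e]; rfl
  have gam_H : ∃ q, (q < S.k ∨ q = S.k + 1) ∧ gam = S.hT q := by
    by_cases hL2 : S.Lst gam
    · rcases hL2 with hh2 | ⟨q, hq, he⟩
      · exact hh2
      · exact absurd (he ▸ gam_south) (S.vT_south_ne (S.jle hq))
    · exfalso
      have heq := S.budget gam_mem gam_gray hL2 S.kap0_mem S.kap0_gray S.kap0_unl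
      exact S.nu_ne (by rw [← S.kap0_south', ← heq, gam_south])
  obtain ⟨q, hq, hgH⟩ := gam_H
  have hke : S.kap0.east = (S.hT q).west := by rw [← gam_west, hgH]
  set del := S.f (S.L * S.w) (S.L - 2) with hdel
  have del_mem : del ∈ S.T.tiles := S.mem (by omega) (by omega)
  have del_gray : del.color = BWG.gray := by
    rw [hdel, S.g_colV (by omega), if_neg (by omega)]
  have del_west : del.west = gam.east := by
    have e : (S.f (S.L * S.w - 1 + 1) (S.L - 2)).west = (S.f (S.L * S.w - 1) (S.L - 2)).east :=
      S.adjW (by omega) (by omega)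
    rw [show S.L * S.w - 1 + 1 = S.L * S.w by omega] at e
    exact e
  have eps_V : ∃ p, (p < S.k ∨ p = S.k + 1) ∧ S.vT (S.L - 3) = S.vT p := by
    by_cases hL2 : S.Lst (S.vT (S.L - 3))
    · rcases hL2 with ⟨p, hp, he⟩ | hh2
      · exact absurd (he ▸ S.vT_west (by omega)) (S.hT_west_ne (S.jle hp))
      · exact hh2
    · exfalso
      have heq := S.budget (S.vT_mem (by omega)) (by
        rw [S.vT_color (by omega), if_neg (by omega)]) hL2 S.kap0_mem S.kap0_gray S.kap0_unl
      exact S.eta_ne (by rw [← S.kap0_west', ← heq, S.vT_west (by omega)])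
  obtain ⟨p, hp, hepsV⟩ := eps_V
  have del_south_ne : del.south ≠ S.gn := by
    have e : (S.f (S.L * S.w) (S.L - 3 + 1)).south = (S.f (S.L * S.w) (S.L - 3)).north :=
      S.adjS (by omega) (by omega)
    rw [show S.L - 3 + 1 = S.L - 2 by omega] at e
    rw [hdel, e, show S.f (S.L * S.w) (S.L - 3) = S.vT (S.L - 3) from rfl, hepsV]
    exact S.vT_north_ne (S.jle1 hp)
  have del_west_ne : del.west ≠ S.ge := by
    rw [del_west, hgH]; exact S.hT_east_ne (S.jle1 hq)
  have del_unl : ¬ S.Lst del := by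
    rintro (⟨q2, hq2, he⟩ | ⟨q2, hq2, he⟩)
    · exact del_south_ne (he ▸ S.hT_south (S.jle hq2))
    · exact del_west_ne (he ▸ S.vT_west (S.jle hq2))
  have del_kap : del = S.kap0 :=
    S.budget del_mem del_gray del_unl S.kap0_mem S.kap0_gray S.kap0_unl
  have hetaq : S.eta = (S.hT q).east := by
    rw [← S.kap0_west', ← del_kap, del_west, hgH]
  have hqk : S.hT (q + 1) = S.hT (S.k + 1) := by
    refine S.tile_eta (S.hT_mem (S.jle1 hq)) (S.hT_south (S.jle1 hq)) ?_
    rw [S.hT_stepW (S.jle1 hq), ← hetaq]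
  have q_eq : q = S.k + 1 := by
    rcases hq with hq | hq
    · exact absurd hqk (S.hT_ne' (by omega) (by omega) (by omega))
    · exact hq
  rw [hke, q_eq]
  rfl


/-! ### facts about the two white counter tiles -/

lemma wT_facts : (S.hT S.k).north = S.gn ∧ (S.hT S.k).south = S.gn ∧
    (S.hT S.k).east = S.eta ∧ (S.hT S.k).color = BWG.white := by
  have hLL : S.L = 5 * S.k + 8 := rfl
  exact ⟨S.hT_north (by omega), S.hT_south (by omega), S.wT_east,
    by rw [S.hT_color (by omega), if_pos rfl]⟩

lemma vS_facts : (S.vT S.k).west = S.ge ∧ (S.vT S.k).east = S.ge ∧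
    (S.vT S.k).north = S.nu ∧ (S.vT S.k).color = BWG.white := by
  have hLL : S.L = 5 * S.k + 8 := rfl
  exact ⟨S.vT_west (by omega), S.vT_east (by omega), S.vk_north,
    by rw [S.vT_color (by omega), if_pos rfl]⟩

lemma white_ne_gray {u : Tile BWG G} (hu : u.color = BWG.white) (hg : u.color = BWG.gray) :
    False := BWG.noConfusion (hu.symm.trans hg)

lemma kap0_match {u : Tile BWG G} (hu : u ∈ S.T.tiles) (hs : u.south = S.nu)
    (hwe : u.west = S.eta) : u = S.kap0 :=
  S.uniq hu S.kap0_mem (by rw [hs, S.kap0_south']) (by rw [hwe, S.kap0_west'])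

/-! ### occurrence lemmas for the seven distinguished positions -/

lemma B1occ {x y i : ℕ} (hx : x < S.w) (hy : y < S.h) (hy1 : 1 ≤ y) (h1 : 1 ≤ i)
    (h2 : i ≤ S.L - 2) :
    (S.st x y i 0).north = S.gn ∧ (S.st x y i 0).south = S.gn := by
  have hL := S.hL; have hLL : S.L = 5 * S.k + 8 := rfl
  constructor
  · have e := S.st_adjS (i := i) (j := 0) hx hy (by omega) (by omega)
      (Or.inr h1) (Or.inl hy1)
    have hbl : S.st x y i (0 + 1) = S.bT :=
      S.st_blackEq hx hy h1 h2 (by omega) (by omega)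
    rw [hbl, S.bNS] at e
    exact e.symm
  · have e := S.st_adjS_cross hy1 hx hy (by omega) (Or.inr h1)
    have hc' := S.hP x hx (y - 1) (by omega)
    by_cases hic : i = S.P x (y - 1) + 1
    · rw [e, hic, S.D2_eq hx (by omega), S.hT_north (by omega)]
    · by_cases hi3 : i ≤ S.L - 3
      · obtain ⟨m, hm, hbe⟩ := S.CL_R hx (y := y - 1) (by omega) h1 hi3 hic
        rw [e, hbe, S.hT_north (S.jle hm)]
      · have hbe := (S.ct_row hx (y := y - 1) (by omega)).2 i (by omega) (by omega)
        rw [e, hbe, S.hT_north (by omega)]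

lemma B2occ {x y j : ℕ} (hx : x < S.w) (hy : y < S.h) (hx1 : 1 ≤ x) (h1 : 1 ≤ j)
    (h2 : j ≤ S.L - 2) :
    (S.st x y 0 j).east = S.ge ∧ (S.st x y 0 j).west = S.ge := by
  have hL := S.hL; have hLL : S.L = 5 * S.k + 8 := rfl
  constructor
  · have e := S.st_adjW (i := 0) (j := j) hx hy (by omega) (by omega)
      (Or.inl hx1) (Or.inr h1)
    have hbl : S.st x y (0 + 1) j = S.bT :=
      S.st_blackEq hx hy (by omega) (by omega) h1 h2
    rw [hbl, S.bWE] at e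
    exact e.symm
  · have e := S.st_adjW_cross hx1 hx hy (by omega) (Or.inr h1)
    have hc'' := S.hP (x - 1) (by omega) y hy
    by_cases hic : j = S.P (x - 1) y + 1
    · rw [e, hic, S.D1_eq (by omega) hy, S.vT_east (by omega)]
    · by_cases hj3 : j ≤ S.L - 3
      · obtain ⟨m, hm, hbe⟩ := S.CL_C (x := x - 1) (by omega) hy h1 hj3 hic
        rw [e, hbe, S.vT_east (S.jle hm)]
      · have hbe := (S.ct_col (x := x - 1) (by omega) hy).2 j (by omega) (by omega)
        rw [e, hbe, S.vT_east (by omega)]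

lemma C1occ {x y : ℕ} (hx : x < S.w) (hy : y < S.h) (hy1 : 1 ≤ y) :
    (S.st x y (S.L - 1) 0).south = S.nu ∧
      ∃ m, m < S.k ∧ (S.st x y (S.L - 1) 0).north = (S.vT m).south := by
  have hL := S.hL; have hLL : S.L = 5 * S.k + 8 := rfl
  have hc := S.hP x hx y hy
  constructor
  · have e := S.st_adjS_cross (i := S.L - 1) hy1 hx hy (by omega) (Or.inr (by omega))
    rw [e, S.kap_eq hx (by omega), S.kap0_north']
  · refine ⟨S.k - S.P x y, by omega, ?_⟩
    have e := S.st_adjS (i := S.L - 1) (j := 0) hx hy (by omega) (by omega)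
      (Or.inr (by omega)) (Or.inl hy1)
    have hcg := (S.ct_col hx hy).1 1 (by omega) (by omega)
    rw [show (0 : ℕ) + 1 = 1 from rfl] at e
    rw [← e, hcg]
    congr 2

lemma C2occ {x y : ℕ} (hx : x < S.w) (hy : y < S.h) (hx1 : 1 ≤ x) :
    (S.st x y 0 (S.L - 1)).west = S.eta ∧
      ∃ q, q < S.k ∧ (S.st x y 0 (S.L - 1)).east = (S.hT q).west := by
  have hL := S.hL; have hLL : S.L = 5 * S.k + 8 := rfl
  have hc := S.hP x hx y hy
  constructor
  · have e := S.st_adjW_cross (j := S.L - 1) hx1 hx hy (by omega) (Or.inr (by omega))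
    rw [e, S.kap_eq (by omega) hy, S.kap0_east']
  · refine ⟨S.k - S.P x y, by omega, ?_⟩
    have e := S.st_adjW (i := 0) (j := S.L - 1) hx hy (by omega) (by omega)
      (Or.inl hx1) (Or.inr (by omega))
    have hrg := (S.ct_row hx hy).1 1 (by omega) (by omega)
    rw [show (0 : ℕ) + 1 = 1 from rfl] at e
    rw [← e, hrg]
    congr 2


/-! ### extraction lemmas from `UsedAt` -/

lemma usedB1 {t : Tile BWG G} (h : UsedAt S.k S.w S.h S.P S.f t PosKind.B1) :
    t.north = S.gn ∧ t.south = S.gn := by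
  have hLL : S.L = 5 * S.k + 8 := rfl
  obtain ⟨x, hx, y, hy, i, j, hi, hj, hxi, hyj, hks, hft⟩ := h
  obtain ⟨h1, h2, rfl⟩ := hks
  have hy1 : 1 ≤ y := by
    rcases hyj with hh | hh
    · exact hh
    · omega
  have hst : S.st x y i 0 = t := hft
  rw [← hst]
  exact S.B1occ hx hy hy1 h1 (by omega)

lemma usedB1x {t : Tile BWG G} (h : UsedAt S.k S.w S.h S.P S.f t PosKind.B1) :
    ∃ v, v ∈ S.T.tiles ∧ v.color = BWG.white ∧ v.west = t.east ∧
      (v.south = S.gn ∨ v.south = S.nu) := by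
  have hL := S.hL; have hLL : S.L = 5 * S.k + 8 := rfl
  obtain ⟨x, hx, y, hy, i, j, hi, hj, hxi, hyj, hks, hft⟩ := h
  obtain ⟨h1, h2, rfl⟩ := hks
  have hy1 : 1 ≤ y := by
    rcases hyj with hh | hh
    · exact hh
    · omega
  have hst : S.st x y i 0 = t := hft
  refine ⟨S.st x y (i + 1) 0, S.st_mem hx hy (by omega) (by omega),
    S.st_white_bot hx hy (by omega) hy1 (Or.inr (by omega)), ?_, ?_⟩
  · have e := S.st_adjW (i := i) (j := 0) hx hy (by omega) (by omega) (Or.inr h1) (Or.inl hy1)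
    rw [e, hst]
  · by_cases h3 : i + 1 ≤ S.L - 2
    · exact Or.inl (S.B1occ hx hy hy1 (by omega) h3).2
    · rw [show i + 1 = S.L - 1 by omega]
      exact Or.inr (S.C1occ hx hy hy1).1

lemma usedB2 {t : Tile BWG G} (h : UsedAt S.k S.w S.h S.P S.f t PosKind.B2) :
    t.east = S.ge ∧ t.west = S.ge := by
  have hLL : S.L = 5 * S.k + 8 := rfl
  obtain ⟨x, hx, y, hy, i, j, hi, hj, hxi, hyj, hks, hft⟩ := h
  obtain ⟨rfl, h1, h2⟩ := hks
  have hx1 : 1 ≤ x := by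
    rcases hxi with hh | hh
    · exact hh
    · omega
  have hst : S.st x y 0 j = t := hft
  rw [← hst]
  exact S.B2occ hx hy hx1 h1 (by omega)

lemma usedB2x {t : Tile BWG G} (h : UsedAt S.k S.w S.h S.P S.f t PosKind.B2) :
    ∃ v, v ∈ S.T.tiles ∧ v.color = BWG.white ∧ v.south = t.north ∧
      (v.west = S.ge ∨ v.west = S.eta) := by
  have hL := S.hL; have hLL : S.L = 5 * S.k + 8 := rfl
  obtain ⟨x, hx, y, hy, i, j, hi, hj, hxi, hyj, hks, hft⟩ := h
  obtain ⟨rfl, h1, h2⟩ := hks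
  have hx1 : 1 ≤ x := by
    rcases hxi with hh | hh
    · exact hh
    · omega
  have hst : S.st x y 0 j = t := hft
  refine ⟨S.st x y 0 (j + 1), S.st_mem hx hy (by omega) (by omega),
    S.st_white_left hx hy (by omega) hx1 (Or.inr (by omega)), ?_, ?_⟩
  · have e := S.st_adjS (i := 0) (j := j) hx hy (by omega) (by omega) (Or.inl hx1) (Or.inr h1)
    rw [e, hst]
  · by_cases h3 : j + 1 ≤ S.L - 2
    · exact Or.inl (S.B2occ hx hy hx1 (by omega) h3).2
    · rw [show j + 1 = S.L - 1 by omega]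
      exact Or.inr (S.C2occ hx hy hx1).1

lemma usedC1 {t : Tile BWG G} (h : UsedAt S.k S.w S.h S.P S.f t PosKind.C1) :
    t.south = S.nu ∧ ∃ m, m < S.k ∧ t.north = (S.vT m).south := by
  have hLL : S.L = 5 * S.k + 8 := rfl
  obtain ⟨x, hx, y, hy, i, j, hi, hj, hxi, hyj, hks, hft⟩ := h
  obtain ⟨rfl, rfl⟩ := hks
  have hy1 : 1 ≤ y := by
    rcases hyj with hh | hh
    · exact hh
    · omega
  have hst : S.st x y (S.L - 1) 0 = t := hft
  rw [← hst]
  exact S.C1occ hx hy hy1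

lemma usedC2 {t : Tile BWG G} (h : UsedAt S.k S.w S.h S.P S.f t PosKind.C2) :
    t.west = S.eta ∧ ∃ q, q < S.k ∧ t.east = (S.hT q).west := by
  have hLL : S.L = 5 * S.k + 8 := rfl
  obtain ⟨x, hx, y, hy, i, j, hi, hj, hxi, hyj, hks, hft⟩ := h
  obtain ⟨rfl, rfl⟩ := hks
  have hx1 : 1 ≤ x := by
    rcases hxi with hh | hh
    · exact hh
    · omega
  have hst : S.st x y 0 (S.L - 1) = t := hft
  rw [← hst]
  exact S.C2occ hx hy hx1

lemma usedA {t : Tile BWG G} (h : UsedAt S.k S.w S.h S.P S.f t PosKind.A) :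
    (∃ u, u ∈ S.T.tiles ∧ u.color = BWG.white ∧ u.west = S.ge ∧ u.south = t.north) ∧
    (∃ v, v ∈ S.T.tiles ∧ v.color = BWG.white ∧ v.south = S.gn ∧ v.west = t.east) := by
  have hL := S.hL; have hLL : S.L = 5 * S.k + 8 := rfl
  obtain ⟨x, hx, y, hy, i, j, hi, hj, hxi, hyj, hks, hft⟩ := h
  obtain ⟨rfl, rfl⟩ := hks
  have hx1 : 1 ≤ x := by
    rcases hxi with hh | hh
    · exact hh
    · omega
  have hy1 : 1 ≤ y := by
    rcases hyj with hh | hh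
    · exact hh
    · omega
  have hst : S.st x y 0 0 = t := hft
  constructor
  · refine ⟨S.st x y 0 1, S.st_mem hx hy (by omega) (by omega),
      S.st_white_left hx hy (by omega) hx1 (Or.inr (by omega)),
      (S.B2occ hx hy hx1 (by omega) (by omega)).2, ?_⟩
    have e := S.st_adjS (i := 0) (j := 0) hx hy (by omega) (by omega)
      (Or.inl hx1) (Or.inl hy1)
    rw [e, hst]
  · refine ⟨S.st x y 1 0, S.st_mem hx hy (by omega) (by omega),
      S.st_white_bot hx hy (by omega) hy1 (Or.inr (by omega)),
      (S.B1occ hx hy hy1 (by omega) (by omega)).2, ?_⟩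
    have e := S.st_adjW (i := 0) (j := 0) hx hy (by omega) (by omega)
      (Or.inl hx1) (Or.inl hy1)
    rw [e, hst]

lemma usedD1 {t : Tile BWG G} (h : UsedAt S.k S.w S.h S.P S.f t PosKind.D1) :
    t = S.vT S.k := by
  obtain ⟨x, hx, y, hy, i, j, hi, hj, hxi, hyj, hks, hft⟩ := h
  obtain ⟨rfl, rfl⟩ := hks
  have hst : S.st x y (S.L - 1) (S.P x y + 1) = t := hft
  rw [← hst]
  exact S.D1_eq hx hy

lemma usedD2 {t : Tile BWG G} (h : UsedAt S.k S.w S.h S.P S.f t PosKind.D2) :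
    t = S.hT S.k := by
  obtain ⟨x, hx, y, hy, i, j, hi, hj, hxi, hyj, hks, hft⟩ := h
  obtain ⟨rfl, rfl⟩ := hks
  have hst : S.st x y (S.P x y + 1) (S.L - 1) = t := hft
  rw [← hst]
  exact S.D2_eq hx hy


/-! ### the twenty-one pair contradictions -/

variable {t : Tile BWG G}

lemma notWB {u : Tile BWG G} (hu : u.color = BWG.white) : u.color ≠ BWG.black := by
  rw [hu]; simp

lemma whT {m : ℕ} {u : Tile BWG G} (hm : m ≤ S.L - 3) (hmk : m ≠ S.k)
    (hu : u.color = BWG.white) (he : u = S.hT m) : False := by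
  have hg := S.hT_color hm
  rw [if_neg hmk, ← he] at hg
  exact white_ne_gray hu hg

lemma wvT {m : ℕ} {u : Tile BWG G} (hm : m ≤ S.L - 3) (hmk : m ≠ S.k)
    (hu : u.color = BWG.white) (he : u = S.vT m) : False := by
  have hg := S.vT_color hm
  rw [if_neg hmk, ← he] at hg
  exact white_ne_gray hu hg

lemma wkap {u : Tile BWG G} (hu : u.color = BWG.white) (he : u = S.kap0) : False :=
  white_ne_gray hu (he ▸ S.kap0_gray)

lemma pA_B1 (hA : UsedAt S.k S.w S.h S.P S.f t PosKind.A)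
    (hB : UsedAt S.k S.w S.h S.P S.f t PosKind.B1) : False := by
  obtain ⟨⟨u, hu1, hu2, hu3, hu4⟩, -⟩ := S.usedA hA
  exact S.notB hu1 (notWB hu2) (by rw [hu4, (S.usedB1 hB).1]) hu3

lemma pA_B2 (hA : UsedAt S.k S.w S.h S.P S.f t PosKind.A)
    (hB : UsedAt S.k S.w S.h S.P S.f t PosKind.B2) : False := by
  obtain ⟨-, ⟨v, hv1, hv2, hv3, hv4⟩⟩ := S.usedA hA
  exact S.notB hv1 (notWB hv2) hv3 (by rw [hv4, (S.usedB2 hB).1])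

lemma pA_C1 (hA : UsedAt S.k S.w S.h S.P S.f t PosKind.A)
    (hC : UsedAt S.k S.w S.h S.P S.f t PosKind.C1) : False := by
  have hLL : S.L = 5 * S.k + 8 := rfl
  obtain ⟨⟨u, hu1, hu2, hu3, hu4⟩, -⟩ := S.usedA hA
  obtain ⟨m, hmk, hN⟩ := (S.usedC1 hC).2
  have he : u = S.vT m := S.uniq hu1 (S.vT_mem (by omega)) (by rw [hu4, hN])
    (by rw [hu3, S.vT_west (by omega)])
  exact S.wvT (by omega) (by omega) hu2 he

lemma pA_C2 (hA : UsedAt S.k S.w S.h S.P S.f t PosKind.A)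
    (hC : UsedAt S.k S.w S.h S.P S.f t PosKind.C2) : False := by
  have hLL : S.L = 5 * S.k + 8 := rfl
  obtain ⟨-, ⟨v, hv1, hv2, hv3, hv4⟩⟩ := S.usedA hA
  obtain ⟨q, hqk, hE⟩ := (S.usedC2 hC).2
  have he : v = S.hT q := S.uniq hv1 (S.hT_mem (by omega)) (by rw [hv3, S.hT_south (by omega)])
    (by rw [hv4, hE])
  exact S.whT (by omega) (by omega) hv2 he

lemma pA_D1 (hA : UsedAt S.k S.w S.h S.P S.f t PosKind.A)
    (hD : UsedAt S.k S.w S.h S.P S.f t PosKind.D1) : False := by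
  obtain ⟨-, ⟨v, hv1, hv2, hv3, hv4⟩⟩ := S.usedA hA
  have hte : t.east = S.ge := by rw [S.usedD1 hD]; exact S.vS_facts.2.1
  exact S.notB hv1 (notWB hv2) hv3 (hv4.trans hte)

lemma pA_D2 (hA : UsedAt S.k S.w S.h S.P S.f t PosKind.A)
    (hD : UsedAt S.k S.w S.h S.P S.f t PosKind.D2) : False := by
  obtain ⟨⟨u, hu1, hu2, hu3, hu4⟩, -⟩ := S.usedA hA
  have htn : t.north = S.gn := by rw [S.usedD2 hD]; exact S.wT_facts.1
  exact S.notB hu1 (notWB hu2) (hu4.trans htn) hu3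

lemma pB1_B2 (ht : t ∈ S.T.tiles) (htw : t.color = BWG.white) (h1 : UsedAt S.k S.w S.h S.P S.f t PosKind.B1)
    (h2 : UsedAt S.k S.w S.h S.P S.f t PosKind.B2) : False :=
  S.notB ht (notWB htw) (S.usedB1 h1).2 (S.usedB2 h2).2

lemma pB1_C1 (h1 : UsedAt S.k S.w S.h S.P S.f t PosKind.B1)
    (h2 : UsedAt S.k S.w S.h S.P S.f t PosKind.C1) : False := by
  have hLL : S.L = 5 * S.k + 8 := rfl
  obtain ⟨m, hmk, hN⟩ := (S.usedC1 h2).2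
  exact S.vT_south_ne (Y := m) (by omega) (by rw [← hN, (S.usedB1 h1).1])

lemma pB1_C2 (ht : t ∈ S.T.tiles) (htw : t.color = BWG.white) (h1 : UsedAt S.k S.w S.h S.P S.f t PosKind.B1)
    (h2 : UsedAt S.k S.w S.h S.P S.f t PosKind.C2) : False := by
  have hLL : S.L = 5 * S.k + 8 := rfl
  have he : t = S.hT (S.k + 1) := S.tile_eta ht (S.usedB1 h1).2 (S.usedC2 h2).1
  exact S.whT (by omega) (by omega) htw he

lemma pB1_D1 (h1 : UsedAt S.k S.w S.h S.P S.f t PosKind.B1)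
    (h2 : UsedAt S.k S.w S.h S.P S.f t PosKind.D1) : False := by
  have htn : t.north = S.nu := by rw [S.usedD1 h2]; exact S.vS_facts.2.2.1
  exact S.nu_ne (by rw [← htn, (S.usedB1 h1).1])

lemma pB1_D2 (h1 : UsedAt S.k S.w S.h S.P S.f t PosKind.B1)
    (h2 : UsedAt S.k S.w S.h S.P S.f t PosKind.D2) : False := by
  have hLL : S.L = 5 * S.k + 8 := rfl
  obtain ⟨v, hv1, hv2, hv3, hv4⟩ := S.usedB1x h1
  have hve : v.west = S.eta := by rw [hv3, S.usedD2 h2]; exact S.wT_facts.2.2.1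
  rcases hv4 with hh | hh
  · exact S.whT (by omega) (by omega) hv2 (S.tile_eta hv1 hh hve)
  · exact S.wkap hv2 (S.kap0_match hv1 hh hve)

lemma pB2_C1 (ht : t ∈ S.T.tiles) (htw : t.color = BWG.white) (h1 : UsedAt S.k S.w S.h S.P S.f t PosKind.B2)
    (h2 : UsedAt S.k S.w S.h S.P S.f t PosKind.C1) : False := by
  have hLL : S.L = 5 * S.k + 8 := rfl
  have he : t = S.vT (S.k + 1) := S.tile_nu ht (S.usedC1 h2).1 (S.usedB2 h1).2
  exact S.wvT (by omega) (by omega) htw he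

lemma pB2_C2 (h1 : UsedAt S.k S.w S.h S.P S.f t PosKind.B2)
    (h2 : UsedAt S.k S.w S.h S.P S.f t PosKind.C2) : False := by
  have hLL : S.L = 5 * S.k + 8 := rfl
  obtain ⟨q, hqk, hE⟩ := (S.usedC2 h2).2
  exact S.hT_west_ne (X := q) (by omega) (by rw [← hE, (S.usedB2 h1).1])

lemma pB2_D1 (h1 : UsedAt S.k S.w S.h S.P S.f t PosKind.B2)
    (h2 : UsedAt S.k S.w S.h S.P S.f t PosKind.D1) : False := by
  have hLL : S.L = 5 * S.k + 8 := rfl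
  obtain ⟨v, hv1, hv2, hv3, hv4⟩ := S.usedB2x h1
  have hvs : v.south = S.nu := by rw [hv3, S.usedD1 h2]; exact S.vS_facts.2.2.1
  rcases hv4 with hh | hh
  · exact S.wvT (by omega) (by omega) hv2 (S.tile_nu hv1 hvs hh)
  · exact S.wkap hv2 (S.kap0_match hv1 hvs hh)

lemma pB2_D2 (h1 : UsedAt S.k S.w S.h S.P S.f t PosKind.B2)
    (h2 : UsedAt S.k S.w S.h S.P S.f t PosKind.D2) : False := by
  have hte : t.east = S.eta := by rw [S.usedD2 h2]; exact S.wT_facts.2.2.1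
  exact S.eta_ne (by rw [← hte, (S.usedB2 h1).1])

lemma pC1_C2 (ht : t ∈ S.T.tiles) (htw : t.color = BWG.white) (h1 : UsedAt S.k S.w S.h S.P S.f t PosKind.C1)
    (h2 : UsedAt S.k S.w S.h S.P S.f t PosKind.C2) : False :=
  S.wkap htw (S.kap0_match ht (S.usedC1 h1).1 (S.usedC2 h2).1)

lemma pC1_D1 (h1 : UsedAt S.k S.w S.h S.P S.f t PosKind.C1)
    (h2 : UsedAt S.k S.w S.h S.P S.f t PosKind.D1) : False := by
  have hLL : S.L = 5 * S.k + 8 := rfl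
  have hs : (S.vT S.k).south = S.nu := by rw [← S.usedD1 h2]; exact (S.usedC1 h1).1
  have he : S.vT S.k = S.vT (S.k + 1) :=
    S.tile_nu (S.vT_mem (by omega)) hs (S.vT_west (by omega))
  exact S.vT_ne (by omega) (by omega) he

lemma pC1_D2 (h1 : UsedAt S.k S.w S.h S.P S.f t PosKind.C1)
    (h2 : UsedAt S.k S.w S.h S.P S.f t PosKind.D2) : False := by
  have hs : t.south = S.gn := by rw [S.usedD2 h2]; exact S.wT_facts.2.1
  exact S.nu_ne (by rw [← (S.usedC1 h1).1, hs])

lemma pC2_D1 (h1 : UsedAt S.k S.w S.h S.P S.f t PosKind.C2)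
    (h2 : UsedAt S.k S.w S.h S.P S.f t PosKind.D1) : False := by
  have hLL : S.L = 5 * S.k + 8 := rfl
  obtain ⟨q, hqk, hE⟩ := (S.usedC2 h1).2
  have hte : t.east = S.ge := by rw [S.usedD1 h2]; exact S.vS_facts.2.1
  exact S.hT_west_ne (X := q) (by omega) (by rw [← hE, hte])

lemma pC2_D2 (h1 : UsedAt S.k S.w S.h S.P S.f t PosKind.C2)
    (h2 : UsedAt S.k S.w S.h S.P S.f t PosKind.D2) : False := by
  have hLL : S.L = 5 * S.k + 8 := rfl
  obtain ⟨q, hqk, hE⟩ := (S.usedC2 h1).2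
  have hte : t.east = S.eta := by rw [S.usedD2 h2]; exact S.wT_facts.2.2.1
  have he : S.hT q = S.hT (S.k + 1) := by
    refine S.uniq (S.hT_mem (by omega)) (S.hT_mem (by omega))
      (by rw [S.hT_south (by omega), S.hT_south (by omega)]) ?_
    rw [← hE, hte]
    rfl
  exact S.hT_ne (by omega) (by omega) he

lemma pD1_D2 (h1 : UsedAt S.k S.w S.h S.P S.f t PosKind.D1)
    (h2 : UsedAt S.k S.w S.h S.P S.f t PosKind.D2) : False := by
  have hLL : S.L = 5 * S.k + 8 := rfl
  exact S.hvT_ne (a := S.k) (b := S.k) (by omega) (by omega) (by rw [← S.usedD2 h2, S.usedD1 h1])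

/-! ### the main mixup lemma -/

lemma mixup (ht : t ∈ S.T.tiles) (htw : t.color = BWG.white) (p q : PosKind) (hp : UsedAt S.k S.w S.h S.P S.f t p)
    (hq : UsedAt S.k S.w S.h S.P S.f t q) : p = q := by
  cases p <;> cases q
  case A.A => rfl
  case B1.B1 => rfl
  case B2.B2 => rfl
  case C1.C1 => rfl
  case C2.C2 => rfl
  case D1.D1 => rfl
  case D2.D2 => rfl
  case A.B1 => exact (S.pA_B1 hp hq).elim
  case B1.A => exact (S.pA_B1 hq hp).elim
  case A.B2 => exact (S.pA_B2 hp hq).elim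
  case B2.A => exact (S.pA_B2 hq hp).elim
  case A.C1 => exact (S.pA_C1 hp hq).elim
  case C1.A => exact (S.pA_C1 hq hp).elim
  case A.C2 => exact (S.pA_C2 hp hq).elim
  case C2.A => exact (S.pA_C2 hq hp).elim
  case A.D1 => exact (S.pA_D1 hp hq).elim
  case D1.A => exact (S.pA_D1 hq hp).elim
  case A.D2 => exact (S.pA_D2 hp hq).elim
  case D2.A => exact (S.pA_D2 hq hp).elim
  case B1.B2 => exact (S.pB1_B2 ht htw hp hq).elim
  case B2.B1 => exact (S.pB1_B2 ht htw hq hp).elim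
  case B1.C1 => exact (S.pB1_C1 hp hq).elim
  case C1.B1 => exact (S.pB1_C1 hq hp).elim
  case B1.C2 => exact (S.pB1_C2 ht htw hp hq).elim
  case C2.B1 => exact (S.pB1_C2 ht htw hq hp).elim
  case B1.D1 => exact (S.pB1_D1 hp hq).elim
  case D1.B1 => exact (S.pB1_D1 hq hp).elim
  case B1.D2 => exact (S.pB1_D2 hp hq).elim
  case D2.B1 => exact (S.pB1_D2 hq hp).elim
  case B2.C1 => exact (S.pB2_C1 ht htw hp hq).elim
  case C1.B2 => exact (S.pB2_C1 ht htw hq hp).elim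
  case B2.C2 => exact (S.pB2_C2 hp hq).elim
  case C2.B2 => exact (S.pB2_C2 hq hp).elim
  case B2.D1 => exact (S.pB2_D1 hp hq).elim
  case D1.B2 => exact (S.pB2_D1 hq hp).elim
  case B2.D2 => exact (S.pB2_D2 hp hq).elim
  case D2.B2 => exact (S.pB2_D2 hq hp).elim
  case C1.C2 => exact (S.pC1_C2 ht htw hp hq).elim
  case C2.C1 => exact (S.pC1_C2 ht htw hq hp).elim
  case C1.D1 => exact (S.pC1_D1 hp hq).elim
  case D1.C1 => exact (S.pC1_D1 hq hp).elim
  case C1.D2 => exact (S.pC1_D2 hp hq).elim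
  case D2.C1 => exact (S.pC1_D2 hq hp).elim
  case C2.D1 => exact (S.pC2_D1 hp hq).elim
  case D1.C2 => exact (S.pC2_D1 hq hp).elim
  case C2.D2 => exact (S.pC2_D2 hp hq).elim
  case D2.C2 => exact (S.pC2_D2 hq hp).elim
  case D1.D2 => exact (S.pD1_D2 hp hq).elim
  case D2.D1 => exact (S.pD1_D2 hq hp).elim

end Setup
end NoMixup
/-- If a DTAS `Θ` self-assembles `Q` using at most `m_b = 1` black and
`m_g = 2k + 3` gray tile types, then a white tile type of `Θ` which is used in one
of the positions `A`, `B₁`, `B₂`, `C₁`, `C₂`, `D₁`, `D₂` of some supertile cannot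
be used in any other of these positions in any supertile. -/
theorem white_positions_no_mixup {G : Type} [DecidableEq G]
    (k w h : ℕ) (P : ℕ → ℕ → ℕ) (hI : InI k w h P)
    (Θ : RTAS BWG G) (hD : DirectedTAS Θ)
    (hb : countColor Θ BWG.black ≤ 1)
    (hg : countColor Θ BWG.gray ≤ 2 * k + 3)
    (f : ℕ → ℕ → Tile BWG G)
    (hf : IsAssignment Θ (QW k w) (QH k h) f)
    (hcol : ∀ X < QW k w, ∀ Y < QH k h, (f X Y).color = QPat k w h P X Y) :
    ∀ t ∈ Θ.tiles, t.color = BWG.white →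
      ∀ p q : PosKind, UsedAt k w h P f t p → UsedAt k w h P f t q → p = q := by
  obtain ⟨F, ρ, hwEq, hhEq, hbij, hPeq⟩ := hI
  have hw2 : 2 ≤ w := by rw [hwEq]; unfold widthF; omega
  have hh2 : 2 ≤ h := by omega
  have hPr : ∀ x < w, ∀ y < h, 1 ≤ P x y ∧ P x y ≤ k := by
    intro x hx y hy
    have hxw : x < widthF F := by omega
    have hy6 : y < 6 := by omega
    have hmem : patF F x y ∈ colorsOf (widthF F) 6 (patF F) := by
      unfold colorsOf
      exact Finset.mem_image.2 ⟨(x, y), Finset.mem_product.2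
        ⟨Finset.mem_range.2 hxw, Finset.mem_range.2 hy6⟩, rfl⟩
    have hmt := hbij.mapsTo (Finset.mem_coe.2 hmem)
    rw [Set.mem_Icc] at hmt
    rw [hPeq x hx y hy]
    exact hmt
  have hk1 : 1 ≤ k := by
    have := hPr 0 (by omega) 0 (by omega)
    omega
  intro t ht htw p q hp hq
  exact NoMixup.Setup.mixup
    (⟨k, w, h, P, Θ, f, hD, hb, hg, hf, hcol, hk1, hw2, hh2, hPr⟩ : NoMixup.Setup G)
    ht htw p q hp hq
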